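/- If λ/μ and α/β are basic skew diagrams with equal skew Schur functions s_{λ/μ} = s_{α/β}, and λ̂/μ, α̂/β denote the skew diagrams obtained by removing the top i boxes from every column of λ/μ and α/β respectively, then s_{λ̂/μ} = s_{α̂/β}. Similarly, removing the leftmost i boxes from every row of both diagrams preserves equality of the skew Schur functions. -/

import Mathlib

open YoungDiagram
open scoped Classical

namespace LRSkew

/-- The cells of the skew diagram `lam/mu`. -/
def skewCells (lam mu : YoungDiagram) : Finset (ℕ × ℕ) := lam.cells \ mu.cells

/-- A semistandard filling of the skew shape `lam/mu`: entries are positive exactly on the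
cells of the shape, rows are weakly increasing and columns are strictly increasing. -/
def IsSSYT (lam mu : YoungDiagram) (T : ℕ × ℕ → ℕ) : Prop :=
  (∀ p, p ∈ skewCells lam mu ↔ T p ≠ 0) ∧
  (∀ i j1 j2, (i, j1) ∈ skewCells lam mu → (i, j2) ∈ skewCells lam mu → j1 ≤ j2 →
    T (i, j1) ≤ T (i, j2)) ∧
  (∀ i1 i2 j, (i1, j) ∈ skewCells lam mu → (i2, j) ∈ skewCells lam mu → i1 < i2 →
    T (i1, j) < T (i2, j))

/-- The number of entries equal to `k` among the cells read (in the reverse reading word: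
right to left along rows, top row first) up to position `(i,j)`. -/
def prefixCount (lam mu : YoungDiagram) (T : ℕ × ℕ → ℕ) (i j k : ℕ) : ℕ :=
  ((skewCells lam mu).filter fun p => (p.1 < i ∨ (p.1 = i ∧ j ≤ p.2)) ∧ T p = k).card

/-- The reverse reading word of the filling is a lattice word. -/
def IsLattice (lam mu : YoungDiagram) (T : ℕ × ℕ → ℕ) : Prop :=
  ∀ i j k, prefixCount lam mu T i j (k + 2) ≤ prefixCount lam mu T i j (k + 1)

/-- The number of entries of the filling equal to `k`. -/
def content (lam mu : YoungDiagram) (T : ℕ × ℕ → ℕ) (k : ℕ) : ℕ :=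
  ((skewCells lam mu).filter fun p => T p = k).card

/-- A Littlewood–Richardson tableau of shape `lam/mu` and content `nu`. -/
def IsLR (lam mu nu : YoungDiagram) (T : ℕ × ℕ → ℕ) : Prop :=
  IsSSYT lam mu T ∧ IsLattice lam mu T ∧ ∀ i, content lam mu T (i + 1) = nu.rowLen i

/-- The Littlewood–Richardson coefficient `c(lam; mu, nu)`. -/
noncomputable def lrCoeff (lam mu nu : YoungDiagram) : ℕ :=
  if mu ≤ lam then {T : ℕ × ℕ → ℕ | IsLR lam mu nu T}.ncard else 0

/-- Equality of the skew Schur functions `s_{lam/mu} = s_{alp/bet}`, expressed through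
their expansions into Schur functions. -/
def SchurEq (lam mu alp bet : YoungDiagram) : Prop :=
  ∀ nu : YoungDiagram, lrCoeff lam mu nu = lrCoeff alp bet nu

/-- The rectangular Young diagram `(k^l)` with `l` rows of length `k`. -/
def rect (k l : ℕ) : YoungDiagram :=
  ⟨Finset.range l ×ˢ Finset.range k, by
    intro a b hba ha
    simp only [Finset.coe_product, Set.mem_prod, Finset.mem_coe, Finset.mem_range] at ha ⊢
    exact ⟨lt_of_le_of_lt hba.1 ha.1, lt_of_le_of_lt hba.2 ha.2⟩⟩

/-- The complement of `nu` in the rectangle `(k^l)`, rotated by 180 degrees so that it is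
again a partition: its parts are `(k - nu_l, …, k - nu_1)`. -/
def complRect (k l : ℕ) (nu : YoungDiagram) : YoungDiagram :=
  ⟨(rect k l).cells.filter fun p => (l - 1 - p.1, k - 1 - p.2) ∉ nu, by
    intro a b hba ha
    simp only [Finset.coe_filter, Set.mem_setOf_eq, mem_cells] at ha ⊢
    refine ⟨(rect k l).isLowerSet hba ha.1, fun hmem => ha.2 ?_⟩
    exact nu.isLowerSet
      (Prod.mk_le_mk.mpr ⟨Nat.sub_le_sub_left hba.1 _, Nat.sub_le_sub_left hba.2 _⟩) hmem⟩

/-- The staircase partition `(n, n-1, …, 2, 1)`. -/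
def staircase (n : ℕ) : YoungDiagram :=
  ⟨(Finset.range n ×ˢ Finset.range n).filter fun p => p.1 + p.2 < n, by
    intro a b hba ha
    simp only [Finset.coe_filter, Set.mem_setOf_eq, Finset.mem_product, Finset.mem_range] at ha ⊢
    exact ⟨⟨lt_of_le_of_lt hba.1 ha.1.1, lt_of_le_of_lt hba.2 ha.1.2⟩,
      lt_of_le_of_lt (Nat.add_le_add hba.1 hba.2) ha.2⟩⟩

/-- A basic skew diagram: no empty rows and no empty columns. -/
def IsBasic (lam mu : YoungDiagram) : Prop :=
  (∀ i, i < lam.colLen 0 → mu.rowLen i < lam.rowLen i) ∧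
  (∀ j, j < lam.rowLen 0 → mu.colLen j < lam.colLen j)

/-- A (basic) skew diagram is connected iff consecutive rows share a column. -/
def IsConnectedSkew (lam mu : YoungDiagram) : Prop :=
  ∀ i, i + 1 < lam.colLen 0 → mu.rowLen i < lam.rowLen (i + 1)

/-- The number of distinct (positive) part sizes of a partition. -/
def dp (lam : YoungDiagram) : ℕ :=
  ((Finset.range (lam.colLen 0)).image fun i => lam.rowLen i).card

/-- A partition is a rectangle: all its parts are equal. -/
def IsRect (mu : YoungDiagram) : Prop :=
  ∀ i, i < mu.colLen 0 → mu.rowLen i = mu.rowLen 0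

/-- Cells of a skew diagram in the same connected component: the reflexive–transitive
closure of sharing a row or a column. -/
def SameComp (s : Finset (ℕ × ℕ)) : ℕ × ℕ → ℕ × ℕ → Prop :=
  Relation.ReflTransGen fun a b => a ∈ s ∧ b ∈ s ∧ (a.1 = b.1 ∨ a.2 = b.2)

/-- Two finite sets of boxes agree up to translation or 180°-rotation of each connected
component independently. -/
def UpToTransRot (s t : Finset (ℕ × ℕ)) : Prop :=
  ∃ f : ℕ × ℕ → ℕ × ℕ, Set.BijOn f ↑s ↑t ∧
    ∀ p ∈ s, ∀ q ∈ s, SameComp s p q →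
      (((f q).1 : ℤ) - (f p).1 = (q.1 : ℤ) - p.1 ∧ ((f q).2 : ℤ) - (f p).2 = (q.2 : ℤ) - p.2) ∨
      (((f q).1 : ℤ) - (f p).1 = (p.1 : ℤ) - q.1 ∧ ((f q).2 : ℤ) - (f p).2 = (p.2 : ℤ) - q.2)


/-! ### Auxiliary development -/

lemma nat_eq_of_lt_iff {a b : ℕ} (h : ∀ k, k < a ↔ k < b) : a = b := by
  rcases lt_trichotomy a b with h' | h' | h'
  · exact absurd ((h a).mpr h') (lt_irrefl a)
  · exact h'
  · exact absurd ((h b).mp h') (lt_irrefl b)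

lemma mem_skew {lam mu : YoungDiagram} {p : ℕ × ℕ} :
    p ∈ skewCells lam mu ↔ p ∈ lam ∧ p ∉ mu := by
  simp [skewCells, Finset.mem_sdiff]

lemma skew_iff_col {lam mu : YoungDiagram} {r j : ℕ} :
    (r, j) ∈ skewCells lam mu ↔ mu.colLen j ≤ r ∧ r < lam.colLen j := by
  rw [mem_skew, mem_iff_lt_colLen, mem_iff_lt_colLen, not_lt, and_comm]

lemma skew_iff_row {lam mu : YoungDiagram} {r j : ℕ} :
    (r, j) ∈ skewCells lam mu ↔ mu.rowLen r ≤ j ∧ j < lam.rowLen r := by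
  rw [mem_skew, mem_iff_lt_rowLen, mem_iff_lt_rowLen, not_lt, and_comm]

/-- The diagram obtained by deleting the top `t` cells of every column. -/
def vshift (t : ℕ) (lam : YoungDiagram) : YoungDiagram :=
  ⟨lam.cells.filter fun p => (p.1 + t, p.2) ∈ lam, by
    intro a b hba ha
    simp only [Finset.coe_filter, Set.mem_setOf_eq, mem_cells] at ha ⊢
    exact ⟨lam.isLowerSet hba ha.1,
      lam.isLowerSet (Prod.mk_le_mk.mpr ⟨Nat.add_le_add_right hba.1 t, hba.2⟩) ha.2⟩⟩

lemma mem_vshift {t : ℕ} {lam : YoungDiagram} {p : ℕ × ℕ} :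
    p ∈ vshift t lam ↔ (p.1 + t, p.2) ∈ lam := by
  constructor
  · intro h
    simpa [vshift] using (Finset.mem_filter.mp h).2
  · intro h
    simp only [vshift, mem_mk, Finset.mem_filter, mem_cells]
    exact Finset.mem_filter.mpr ⟨lam.up_left_mem (Nat.le_add_right _ _) le_rfl h, h⟩

/-- The diagram obtained by deleting the left `t` cells of every row. -/
def hshift (t : ℕ) (lam : YoungDiagram) : YoungDiagram :=
  ⟨lam.cells.filter fun p => (p.1, p.2 + t) ∈ lam, by
    intro a b hba ha
    simp only [Finset.coe_filter, Set.mem_setOf_eq, mem_cells] at ha ⊢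
    exact ⟨lam.isLowerSet hba ha.1,
      lam.isLowerSet (Prod.mk_le_mk.mpr ⟨hba.1, Nat.add_le_add_right hba.2 t⟩) ha.2⟩⟩

lemma mem_hshift {t : ℕ} {lam : YoungDiagram} {p : ℕ × ℕ} :
    p ∈ hshift t lam ↔ (p.1, p.2 + t) ∈ lam := by
  constructor
  · intro h
    simpa [hshift] using (Finset.mem_filter.mp h).2
  · intro h
    simp only [hshift, mem_mk, Finset.mem_filter, mem_cells]
    exact Finset.mem_filter.mpr ⟨lam.up_left_mem le_rfl (Nat.le_add_right _ _) h, h⟩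

lemma vshift_le {t : ℕ} {lam : YoungDiagram} : vshift t lam ≤ lam := by
  intro p hp
  exact lam.up_left_mem (Nat.le_add_right _ _) le_rfl (mem_vshift.mp hp)

lemma hshift_le {t : ℕ} {lam : YoungDiagram} : hshift t lam ≤ lam := by
  intro p hp
  exact lam.up_left_mem le_rfl (Nat.le_add_right _ _) (mem_hshift.mp hp)

lemma vshift_succ_le {i : ℕ} {lam : YoungDiagram} : vshift (i + 1) lam ≤ vshift 1 lam := by
  intro p hp
  simp only [mem_cells, mem_vshift] at hp ⊢
  exact lam.up_left_mem (by omega) le_rfl hp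

lemma hshift_succ_le {i : ℕ} {lam : YoungDiagram} : hshift (i + 1) lam ≤ hshift 1 lam := by
  intro p hp
  simp only [mem_cells, mem_hshift] at hp ⊢
  exact lam.up_left_mem le_rfl (by omega) hp

lemma vshift_vshift (i : ℕ) (lam : YoungDiagram) :
    vshift i (vshift 1 lam) = vshift (i + 1) lam := by
  apply SetLike.ext
  intro p
  rw [mem_vshift, mem_vshift, mem_vshift]
  simp [Nat.add_assoc]

lemma hshift_hshift (i : ℕ) (lam : YoungDiagram) :
    hshift i (hshift 1 lam) = hshift (i + 1) lam := by
  apply SetLike.ext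
  intro p
  rw [mem_hshift, mem_hshift, mem_hshift]
  simp [Nat.add_assoc]

lemma vshift_zero (lam : YoungDiagram) : vshift 0 lam = lam := by
  apply SetLike.ext
  intro p
  rw [mem_vshift]
  simp

lemma hshift_zero (lam : YoungDiagram) : hshift 0 lam = lam := by
  apply SetLike.ext
  intro p
  rw [mem_hshift]
  simp

/-- The set of nonempty rows of the skew diagram `lam/mu`. -/
def neRows (lam mu : YoungDiagram) : Finset ℕ :=
  (Finset.range (lam.colLen 0)).filter fun r => mu.rowLen r < lam.rowLen r

/-- The number of nonempty rows strictly above row `r`. -/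
def gRow (lam mu : YoungDiagram) (r : ℕ) : ℕ := ((neRows lam mu).filter (· < r)).card

/-- The number of nonempty rows. -/
def RR (lam mu : YoungDiagram) : ℕ := (neRows lam mu).card

/-- The set of nonempty columns. -/
def neCols (lam mu : YoungDiagram) : Finset ℕ :=
  (Finset.range (lam.rowLen 0)).filter fun j => mu.colLen j < lam.colLen j

/-- The number of nonempty columns. -/
def CC (lam mu : YoungDiagram) : ℕ := (neCols lam mu).card

lemma rowLen_pos_iff {lam : YoungDiagram} {r : ℕ} : 0 < lam.rowLen r ↔ r < lam.colLen 0 := by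
  rw [← mem_iff_lt_rowLen, mem_iff_lt_colLen]

lemma mem_neRows {lam mu : YoungDiagram} {r : ℕ} :
    r ∈ neRows lam mu ↔ mu.rowLen r < lam.rowLen r := by
  simp only [neRows, Finset.mem_filter, Finset.mem_range, and_iff_right_iff_imp]
  intro h
  exact rowLen_pos_iff.mp (Nat.pos_of_ne_zero (by omega))

lemma mem_neCols {lam mu : YoungDiagram} {j : ℕ} :
    j ∈ neCols lam mu ↔ mu.colLen j < lam.colLen j := by
  simp only [neCols, Finset.mem_filter, Finset.mem_range, and_iff_right_iff_imp]
  intro h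
  have h0 : (0, j) ∈ lam := mem_iff_lt_colLen.mpr (Nat.pos_of_ne_zero (by omega))
  rw [mem_iff_lt_rowLen] at h0
  exact h0

lemma row_mem_neRows {lam mu : YoungDiagram} {p : ℕ × ℕ} (hp : p ∈ skewCells lam mu) :
    p.1 ∈ neRows lam mu := by
  obtain ⟨h1, h2⟩ := mem_skew.mp hp
  rw [mem_neRows]
  have := mem_iff_lt_rowLen.mp (show (p.1, p.2) ∈ lam by simpa using h1)
  have h2' : ¬ p.2 < mu.rowLen p.1 := fun hc => h2 (by
    have : (p.1, p.2) ∈ mu := mem_iff_lt_rowLen.mpr hc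
    simpa using this)
  omega

lemma col_mem_neCols {lam mu : YoungDiagram} {p : ℕ × ℕ} (hp : p ∈ skewCells lam mu) :
    p.2 ∈ neCols lam mu := by
  obtain ⟨h1, h2⟩ := mem_skew.mp hp
  rw [mem_neCols]
  have := mem_iff_lt_colLen.mp (show (p.1, p.2) ∈ lam by simpa using h1)
  have h2' : ¬ p.1 < mu.colLen p.2 := fun hc => h2 (by
    have : (p.1, p.2) ∈ mu := mem_iff_lt_colLen.mpr hc
    simpa using this)
  omega

lemma gRow_mono {lam mu : YoungDiagram} {r1 r2 : ℕ} (h : r1 ≤ r2) :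
    gRow lam mu r1 ≤ gRow lam mu r2 := by
  apply Finset.card_le_card
  intro x hx
  simp only [Finset.mem_filter] at hx ⊢
  exact ⟨hx.1, by omega⟩

lemma gRow_lt {lam mu : YoungDiagram} {r1 r2 : ℕ} (h1 : r1 ∈ neRows lam mu) (h : r1 < r2) :
    gRow lam mu r1 < gRow lam mu r2 := by
  apply Finset.card_lt_card
  constructor
  · intro x hx
    simp only [Finset.mem_filter] at hx ⊢
    exact ⟨hx.1, by omega⟩
  · intro hsub
    have : r1 ∈ (neRows lam mu).filter (· < r2) := by
      simp only [Finset.mem_filter]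
      exact ⟨h1, h⟩
    have := hsub this
    simp only [Finset.mem_filter] at this
    omega

lemma gRow_lt_RR {lam mu : YoungDiagram} {r : ℕ} (h : r ∈ neRows lam mu) :
    gRow lam mu r < RR lam mu := by
  apply Finset.card_lt_card
  constructor
  · exact Finset.filter_subset _ _
  · intro hsub
    have := hsub h
    simp only [Finset.mem_filter] at this
    omega

lemma gRow_inj {lam mu : YoungDiagram} {r1 r2 : ℕ} (h1 : r1 ∈ neRows lam mu)
    (h2 : r2 ∈ neRows lam mu) (h : gRow lam mu r1 = gRow lam mu r2) : r1 = r2 := by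
  rcases lt_trichotomy r1 r2 with h' | h' | h'
  · exact absurd (gRow_lt h1 h') (by omega)
  · exact h'
  · exact absurd (gRow_lt h2 h') (by omega)

lemma gRow_surj {lam mu : YoungDiagram} :
    ∀ k, k < RR lam mu → ∃ r ∈ neRows lam mu, gRow lam mu r = k := by
  intro k
  induction k with
  | zero =>
    intro hk
    have hne : (neRows lam mu).Nonempty := Finset.card_pos.mp hk
    obtain ⟨r, hr, hmin⟩ := (neRows lam mu).exists_min_image id hne
    refine ⟨r, hr, ?_⟩
    rw [gRow, Finset.card_eq_zero]
    apply Finset.filter_eq_empty_iff.mpr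
    intro x hx
    have := hmin x hx
    simp only [id] at this
    omega
  | succ k ih =>
    intro hk
    obtain ⟨r, hr, hgr⟩ := ih (by omega)
    have hne : ((neRows lam mu).filter (r < ·)).Nonempty := by
      by_contra hcon
      rw [Finset.not_nonempty_iff_eq_empty, Finset.filter_eq_empty_iff] at hcon
      have hsub : neRows lam mu ⊆ insert r ((neRows lam mu).filter (· < r)) := by
        intro x hx
        have := hcon hx
        simp only [not_lt] at this
        rcases Nat.lt_or_ge x r with h' | h'
        · exact Finset.mem_insert_of_mem (Finset.mem_filter.mpr ⟨hx, h'⟩)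
        · have : x = r := by omega
          simp [this]
      have := Finset.card_le_card hsub
      have hcard := Finset.card_insert_le r ((neRows lam mu).filter (· < r))
      rw [← gRow] at hcard
      have : RR lam mu ≤ gRow lam mu r + 1 := le_trans this hcard
      omega
    obtain ⟨s, hs, hmin⟩ := ((neRows lam mu).filter (r < ·)).exists_min_image id hne
    simp only [Finset.mem_filter] at hs
    refine ⟨s, hs.1, ?_⟩
    have : (neRows lam mu).filter (· < s) = insert r ((neRows lam mu).filter (· < r)) := by
      apply Finset.ext
      intro x
      simp only [Finset.mem_insert, Finset.mem_filter]
      constructor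
      · rintro ⟨hx, hxs⟩
        rcases Nat.lt_or_ge x r with h' | h'
        · exact Or.inr ⟨hx, h'⟩
        · rcases Nat.eq_or_lt_of_le h' with h'' | h''
          · exact Or.inl h''.symm
          · exfalso
            have := hmin x (Finset.mem_filter.mpr ⟨hx, h''⟩)
            simp only [id] at this
            omega
      · rintro (rfl | ⟨hx, hxr⟩)
        · exact ⟨hr, hs.2⟩
        · exact ⟨hx, by omega⟩
    rw [gRow, this, Finset.card_insert_of_notMem (by
      intro hc
      simp only [Finset.mem_filter] at hc
      omega), ← gRow, hgr]

lemma prefixCount_pos {lam mu : YoungDiagram} {T : ℕ × ℕ → ℕ} {p : ℕ × ℕ}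
    (hp : p ∈ skewCells lam mu) {m : ℕ} (hm : T p = m) :
    0 < prefixCount lam mu T p.1 p.2 m := by
  rw [prefixCount, Finset.card_pos]
  exact ⟨p, Finset.mem_filter.mpr ⟨hp, ⟨Or.inr ⟨rfl, le_rfl⟩, hm⟩⟩⟩

lemma exists_of_prefixCount_pos {lam mu : YoungDiagram} {T : ℕ × ℕ → ℕ} {i j m : ℕ}
    (h : 0 < prefixCount lam mu T i j m) :
    ∃ q ∈ skewCells lam mu, (q.1 < i ∨ (q.1 = i ∧ j ≤ q.2)) ∧ T q = m := by
  rw [prefixCount, Finset.card_pos] at h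
  obtain ⟨q, hq⟩ := h
  rw [Finset.mem_filter] at hq
  exact ⟨q, hq.1, hq.2.1, hq.2.2⟩

/-- Row-bound lemma: an entry `m` lies in a row with at least `m - 1` nonempty rows above. -/
lemma entry_le_gRow {lam mu nu : YoungDiagram} {T : ℕ × ℕ → ℕ} (hT : IsLR lam mu nu T) :
    ∀ m p, p ∈ skewCells lam mu → T p = m → m ≤ gRow lam mu p.1 + 1 := by
  obtain ⟨⟨hsupp, hrow, hcol⟩, hlat, hcont⟩ := hT
  intro m
  induction m with
  | zero => intro p _ _; omega
  | succ m ih =>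
    intro p hp hTp
    rcases Nat.eq_zero_or_pos m with rfl | hm
    · omega
    · obtain ⟨m', rfl⟩ := Nat.exists_eq_add_of_le hm
      have hlat' := hlat p.1 p.2 m'
      have hpos : 0 < prefixCount lam mu T p.1 p.2 (m' + 2) :=
        prefixCount_pos hp (by omega)
      have hpos' : 0 < prefixCount lam mu T p.1 p.2 (m' + 1) := lt_of_lt_of_le hpos hlat'
      obtain ⟨q, hq, hqpre, hqT⟩ := exists_of_prefixCount_pos hpos'
      rcases hqpre with h' | ⟨h1, h2⟩
      · have hq1 : 1 + m' ≤ gRow lam mu q.1 + 1 := ih q hq (by omega)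
        have : gRow lam mu q.1 < gRow lam mu p.1 := gRow_lt (row_mem_neRows hq) h'
        omega
      · rcases Nat.eq_or_lt_of_le h2 with h'' | h''
        · exfalso
          have : q = p := by
            apply Prod.ext
            · exact h1
            · exact h''.symm
          rw [this] at hqT
          omega
        · exfalso
          have := hrow p.1 p.2 q.2 (by simpa using hp)
            (by rw [show (p.1, q.2) = q from Prod.ext h1.symm rfl]; exact hq) (by omega)
          rw [show (p.1, p.2) = p from rfl] at this
          rw [show (p.1, q.2) = q from Prod.ext h1.symm rfl] at this
          omega

lemma entry_le_colLen {lam mu nu : YoungDiagram} {T : ℕ × ℕ → ℕ} (hT : IsLR lam mu nu T)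
    {p : ℕ × ℕ} (hp : p ∈ skewCells lam mu) : T p ≤ lam.colLen 0 := by
  have h1 := entry_le_gRow hT (T p) p hp rfl
  have h2 := gRow_lt_RR (row_mem_neRows hp)
  have h3 : RR lam mu ≤ lam.colLen 0 := by
    rw [RR]
    calc (neRows lam mu).card ≤ (Finset.range (lam.colLen 0)).card :=
          Finset.card_le_card (Finset.filter_subset _ _)
      _ = lam.colLen 0 := Finset.card_range _
  omega

lemma colLen_le_RR_of_isLR {lam mu nu : YoungDiagram} {T : ℕ × ℕ → ℕ} (hT : IsLR lam mu nu T) :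
    nu.colLen 0 ≤ RR lam mu := by
  rcases Nat.eq_zero_or_pos (nu.colLen 0) with h | h
  · omega
  · obtain ⟨L, hL⟩ : ∃ L, nu.colLen 0 = L + 1 := ⟨nu.colLen 0 - 1, by omega⟩
    have hrl : 0 < nu.rowLen L := by
      rw [← mem_iff_lt_rowLen, mem_iff_lt_colLen]
      omega
    have hc := hT.2.2 L
    rw [content] at hc
    have : 0 < ((skewCells lam mu).filter fun p => T p = L + 1).card := by omega
    rw [Finset.card_pos] at this
    obtain ⟨p, hp⟩ := this
    rw [Finset.mem_filter] at hp
    have h1 := entry_le_gRow hT (L + 1) p hp.1 hp.2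
    have h2 := gRow_lt_RR (row_mem_neRows hp.1)
    omega

lemma rowLen_le_CC_of_isLR {lam mu nu : YoungDiagram} {T : ℕ × ℕ → ℕ} (hT : IsLR lam mu nu T) :
    nu.rowLen 0 ≤ CC lam mu := by
  have hc := hT.2.2 0
  rw [content] at hc
  rw [← hc, CC]
  apply Finset.card_le_card_of_injOn (fun p => p.2)
  · intro p hp
    rw [Finset.mem_coe, Finset.mem_filter] at hp
    exact col_mem_neCols hp.1
  · intro p hp q hq hpq
    simp only [Finset.coe_filter, Set.mem_setOf_eq] at hp hq
    have hpq' : p.2 = q.2 := hpq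
    by_contra hne
    have hcol := hT.1.2.2
    rcases Nat.lt_or_ge p.1 q.1 with h' | h'
    · have := hcol p.1 q.1 p.2 (by rw [Prod.mk.eta]; exact hp.1)
        (by rw [hpq', Prod.mk.eta]; exact hq.1) h'
      rw [Prod.mk.eta] at this
      rw [hpq', Prod.mk.eta] at this
      omega
    · have hne1 : p.1 ≠ q.1 := fun h => hne (Prod.ext h hpq')
      have h'' : q.1 < p.1 := by omega
      have := hcol q.1 p.1 q.2 (by rw [Prod.mk.eta]; exact hq.1)
        (by rw [← hpq', Prod.mk.eta]; exact hp.1) h''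
      rw [Prod.mk.eta] at this
      rw [← hpq', Prod.mk.eta] at this
      omega

lemma rowLen_eq_of {Y : YoungDiagram} {r n : ℕ} (h : ∀ j, (r, j) ∈ Y ↔ j < n) :
    Y.rowLen r = n := by
  apply nat_eq_of_lt_iff
  intro k
  rw [← mem_iff_lt_rowLen, h]

/-- The partition `(C, nu_1, nu_2, …)` (when `nu_1 ≤ C`; in general, `max C nu_1` first). -/
def consDiag (C : ℕ) (nu : YoungDiagram) : YoungDiagram :=
  ⟨({0} ×ˢ Finset.range (max C (nu.rowLen 0))) ∪ nu.cells.image (fun p => (p.1 + 1, p.2)), by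
    rintro ⟨r, j⟩ ⟨a, b⟩ hba h
    simp only [Finset.coe_union, Finset.coe_product, Set.mem_union, Set.mem_prod,
      Finset.mem_coe, Finset.mem_singleton, Finset.mem_range, Finset.mem_image] at h ⊢
    obtain ⟨h1, h2⟩ := Prod.mk_le_mk.mp hba
    rcases h with ⟨rfl, hj⟩ | ⟨q, hq, hqe⟩
    · left
      exact ⟨by omega, by omega⟩
    · obtain ⟨hq1, hq2⟩ := Prod.mk.injEq .. ▸ hqe
      rcases Nat.eq_zero_or_pos a with rfl | ha
      · left
        refine ⟨rfl, ?_⟩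
        have hj' : j < nu.rowLen q.1 := mem_iff_lt_rowLen.mp (by rw [show (q.1, j) = (q.1, q.2) by rw [hq2]]; simpa using hq)
        have := nu.rowLen_anti 0 q.1 (Nat.zero_le _)
        omega
      · right
        obtain ⟨a', rfl⟩ : ∃ a', a = a' + 1 := ⟨a - 1, by omega⟩
        refine ⟨(a', b), ?_, rfl⟩
        have : (a', b) ≤ q := Prod.mk_le_mk.mpr ⟨by omega, by omega⟩
        exact Finset.mem_coe.mpr (mem_cells _ |>.mpr (nu.isLowerSet this (by simpa using hq)))⟩

lemma mem_consDiag {C : ℕ} {nu : YoungDiagram} {r j : ℕ} :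
    (r, j) ∈ consDiag C nu ↔ (r = 0 ∧ j < max C (nu.rowLen 0)) ∨
      (∃ r', r = r' + 1 ∧ (r', j) ∈ nu) := by
  rw [consDiag, ← mem_cells]
  simp only [Finset.mem_union, Finset.mem_product, Finset.mem_singleton,
    Finset.mem_range, Finset.mem_image, mem_cells]
  constructor
  · rintro (⟨h1, h2⟩ | ⟨q, hq, hqe⟩)
    · exact Or.inl ⟨h1, h2⟩
    · obtain ⟨hq1, hq2⟩ := Prod.mk.injEq .. ▸ hqe
      exact Or.inr ⟨q.1, hq1.symm, by rw [← hq2, Prod.mk.eta]; exact hq⟩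
  · rintro (⟨h1, h2⟩ | ⟨r', rfl, h⟩)
    · exact Or.inl ⟨h1, h2⟩
    · exact Or.inr ⟨(r', j), h, rfl⟩

lemma consDiag_rowLen_zero {C : ℕ} {nu : YoungDiagram} (h : nu.rowLen 0 ≤ C) :
    (consDiag C nu).rowLen 0 = C := by
  apply rowLen_eq_of
  intro j
  rw [mem_consDiag]
  constructor
  · rintro (⟨_, hj⟩ | ⟨r', hr', _⟩)
    · omega
    · omega
  · intro hj
    exact Or.inl ⟨rfl, by omega⟩

lemma consDiag_rowLen_succ {C : ℕ} {nu : YoungDiagram} (k : ℕ) :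
    (consDiag C nu).rowLen (k + 1) = nu.rowLen k := by
  apply rowLen_eq_of
  intro j
  rw [mem_consDiag]
  constructor
  · rintro (⟨h, _⟩ | ⟨r', hr', hm⟩)
    · omega
    · have : r' = k := by omega
      rw [← this, ← mem_iff_lt_rowLen]
      exact hm
  · intro hj
    exact Or.inr ⟨k, rfl, mem_iff_lt_rowLen.mpr hj⟩

/-- The partition `nu + (1^R)` (when `ℓ(nu) ≤ R`). -/
def addOneDiag (R : ℕ) (nu : YoungDiagram) : YoungDiagram :=
  ⟨(Finset.range (max R (nu.colLen 0)) ×ˢ {0}) ∪ nu.cells.image (fun p => (p.1, p.2 + 1)), by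
    rintro ⟨r, j⟩ ⟨a, b⟩ hba h
    simp only [Finset.coe_union, Finset.coe_product, Set.mem_union, Set.mem_prod,
      Finset.mem_coe, Finset.mem_singleton, Finset.mem_range, Finset.mem_image] at h ⊢
    obtain ⟨h1, h2⟩ := Prod.mk_le_mk.mp hba
    rcases h with ⟨hr, hj⟩ | ⟨q, hq, hqe⟩
    · left
      exact ⟨by omega, by omega⟩
    · obtain ⟨hq1, hq2⟩ := Prod.mk.injEq .. ▸ hqe
      rcases Nat.eq_zero_or_pos b with rfl | hb
      · left
        refine ⟨?_, rfl⟩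
        have : (q.1, 0) ∈ nu := nu.up_left_mem le_rfl (Nat.zero_le _) (by simpa using hq)
        have := mem_iff_lt_colLen.mp this
        omega
      · right
        obtain ⟨b', rfl⟩ : ∃ b', b = b' + 1 := ⟨b - 1, by omega⟩
        refine ⟨(a, b'), ?_, rfl⟩
        have : (a, b') ≤ q := Prod.mk_le_mk.mpr ⟨by omega, by omega⟩
        exact Finset.mem_coe.mpr (mem_cells _ |>.mpr (nu.isLowerSet this (by simpa using hq)))⟩

lemma mem_addOneDiag {R : ℕ} {nu : YoungDiagram} {r j : ℕ} :
    (r, j) ∈ addOneDiag R nu ↔ (j = 0 ∧ r < max R (nu.colLen 0)) ∨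
      (∃ j', j = j' + 1 ∧ (r, j') ∈ nu) := by
  rw [addOneDiag, ← mem_cells]
  simp only [Finset.mem_union, Finset.mem_product, Finset.mem_singleton,
    Finset.mem_range, Finset.mem_image, mem_cells]
  constructor
  · rintro (⟨h1, h2⟩ | ⟨q, hq, hqe⟩)
    · exact Or.inl ⟨h2, h1⟩
    · obtain ⟨hq1, hq2⟩ := Prod.mk.injEq .. ▸ hqe
      exact Or.inr ⟨q.2, hq2.symm, by rw [← hq1, Prod.mk.eta]; exact hq⟩
  · rintro (⟨h1, h2⟩ | ⟨j', rfl, h⟩)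
    · exact Or.inl ⟨h2, h1⟩
    · exact Or.inr ⟨(r, j'), h, rfl⟩

lemma addOneDiag_rowLen {R : ℕ} {nu : YoungDiagram} (h : nu.colLen 0 ≤ R) (k : ℕ) :
    (addOneDiag R nu).rowLen k = if k < R then nu.rowLen k + 1 else 0 := by
  apply rowLen_eq_of
  intro j
  rw [mem_addOneDiag]
  split_ifs with hk
  · constructor
    · rintro (⟨rfl, _⟩ | ⟨j', rfl, hm⟩)
      · omega
      · have := mem_iff_lt_rowLen.mp hm
        omega
    · intro hj
      rcases Nat.eq_zero_or_pos j with rfl | hj'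
      · exact Or.inl ⟨rfl, by omega⟩
      · refine Or.inr ⟨j - 1, by omega, mem_iff_lt_rowLen.mpr (by omega)⟩
  · constructor
    · rintro (⟨rfl, hr⟩ | ⟨j', rfl, hm⟩)
      · omega
      · exfalso
        have hc := mem_iff_lt_colLen.mp (nu.up_left_mem le_rfl (Nat.zero_le _) hm)
        omega
    · omega

lemma addOneDiag_colLen_zero {R : ℕ} {nu : YoungDiagram} (h : nu.colLen 0 ≤ R) :
    (addOneDiag R nu).colLen 0 = R := by
  apply nat_eq_of_lt_iff
  intro k
  rw [← mem_iff_lt_colLen, mem_addOneDiag]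
  constructor
  · rintro (⟨_, hr⟩ | ⟨j', hj', _⟩)
    · omega
    · omega
  · intro hk
    exact Or.inl ⟨rfl, by omega⟩

/-- Number of columns of `lam/mu` of length at least `k + 1`. -/
def colCount (lam mu : YoungDiagram) (k : ℕ) : ℕ :=
  ((Finset.range (lam.rowLen 0)).filter fun j => mu.colLen j + k < lam.colLen j).card

lemma colCount_zero (lam mu : YoungDiagram) : colCount lam mu 0 = CC lam mu := by
  rfl

lemma colCount_le (lam mu : YoungDiagram) {k1 k2 : ℕ} (h : k1 ≤ k2) :
    colCount lam mu k2 ≤ colCount lam mu k1 := by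
  apply Finset.card_le_card
  intro j hj
  simp only [Finset.mem_filter, Finset.mem_range] at hj ⊢
  exact ⟨hj.1, by omega⟩

/-- The partition whose `k`-th part is the number of columns of `lam/mu` of length `≥ k+1`. -/
def colDiag (lam mu : YoungDiagram) : YoungDiagram :=
  ⟨(Finset.range (lam.colLen 0) ×ˢ Finset.range (lam.rowLen 0)).filter
      (fun p => p.2 < colCount lam mu p.1), by
    rintro ⟨r, j⟩ ⟨a, b⟩ hba h
    simp only [Finset.coe_filter, Set.mem_setOf_eq, Finset.mem_product, Finset.mem_range] at h ⊢
    obtain ⟨h1, h2⟩ := Prod.mk_le_mk.mp hba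
    have := colCount_le lam mu h1
    exact ⟨⟨by omega, by omega⟩, by omega⟩⟩

lemma mem_colDiag {lam mu : YoungDiagram} {k j : ℕ} :
    (k, j) ∈ colDiag lam mu ↔ j < colCount lam mu k := by
  rw [colDiag, ← mem_cells]
  simp only [Finset.mem_filter, Finset.mem_product, Finset.mem_range]
  constructor
  · rintro ⟨_, h⟩
    exact h
  · intro hj
    refine ⟨⟨?_, ?_⟩, hj⟩
    · have hpos : 0 < colCount lam mu k := by omega
      rw [colCount, Finset.card_pos] at hpos
      obtain ⟨j0, hj0⟩ := hpos
      simp only [Finset.mem_filter, Finset.mem_range] at hj0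
      have h1 : k < lam.colLen j0 := by omega
      have := lam.colLen_anti 0 j0 (Nat.zero_le _)
      omega
    · have hle : colCount lam mu k ≤ lam.rowLen 0 := by
        rw [colCount]
        calc _ ≤ (Finset.range (lam.rowLen 0)).card :=
              Finset.card_le_card (Finset.filter_subset _ _)
          _ = _ := Finset.card_range _
      omega

lemma rowLen_colDiag (lam mu : YoungDiagram) (k : ℕ) :
    (colDiag lam mu).rowLen k = colCount lam mu k := by
  apply rowLen_eq_of
  intro j
  exact mem_colDiag

lemma colDiag_colLen_le (lam mu : YoungDiagram) :
    (colDiag lam mu).colLen 0 ≤ RR lam mu := by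
  rcases Nat.eq_zero_or_pos ((colDiag lam mu).colLen 0) with h | h
  · omega
  · obtain ⟨c, hc⟩ : ∃ c, (colDiag lam mu).colLen 0 = c + 1 := ⟨(colDiag lam mu).colLen 0 - 1, by omega⟩
    have hm : (c, 0) ∈ colDiag lam mu := mem_iff_lt_colLen.mpr (by omega)
    rw [mem_colDiag] at hm
    have : 0 < colCount lam mu c := hm
    rw [colCount, Finset.card_pos] at this
    obtain ⟨j0, hj0⟩ := this
    simp only [Finset.mem_filter, Finset.mem_range] at hj0
    -- rows mu.colLen j0 + t, t = 0..c are nonempty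
    have hsub : ∀ t, t ≤ c → mu.colLen j0 + t ∈ neRows lam mu := by
      intro t ht
      apply row_mem_neRows (p := (mu.colLen j0 + t, j0))
      rw [skew_iff_col]
      omega
    have hinj : Finset.range (c + 1) ⊆ Finset.image (fun t => mu.colLen j0 + t)
        (Finset.range (c + 1)) → True := fun _ => trivial
    have : c + 1 ≤ RR lam mu := by
      rw [RR, ← Finset.card_range (c + 1)]
      apply Finset.card_le_card_of_injOn (fun t => mu.colLen j0 + t)
      · intro t ht
        simp only [Finset.mem_coe, Finset.mem_range] at ht
        exact hsub t (by omega)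
      · intro t1 _ t2 _ h
        simp only at h
        omega
    omega

/-- The column-superstandard filling. -/
def colT (lam mu : YoungDiagram) : ℕ × ℕ → ℕ :=
  fun p => if p ∈ skewCells lam mu then p.1 + 1 - mu.colLen p.2 else 0

lemma colT_isLR (lam mu : YoungDiagram) : IsLR lam mu (colDiag lam mu) (colT lam mu) := by
  have hval : ∀ p ∈ skewCells lam mu, colT lam mu p = p.1 + 1 - mu.colLen p.2 := by
    intro p hp
    rw [colT, if_pos hp]
  have hcol' : ∀ p : ℕ × ℕ, p ∈ skewCells lam mu →
      mu.colLen p.2 ≤ p.1 ∧ p.1 < lam.colLen p.2 := by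
    intro p hp
    have := (skew_iff_col (lam := lam) (mu := mu) (r := p.1) (j := p.2)).mp (by
      rw [Prod.mk.eta]; exact hp)
    exact this
  refine ⟨⟨?_, ?_, ?_⟩, ?_, ?_⟩
  · intro p
    constructor
    · intro hp
      rw [hval p hp]
      have := hcol' p hp
      omega
    · intro hp
      by_contra hc
      rw [colT, if_neg hc] at hp
      omega
  · intro i j1 j2 h1 h2 hle
    rw [hval _ h1, hval _ h2]
    have := hcol' _ h1
    have := hcol' _ h2
    have := mu.colLen_anti j1 j2 hle
    simp only at *
    omega
  · intro i1 i2 j h1 h2 hlt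
    rw [hval _ h1, hval _ h2]
    have := hcol' _ h1
    have := hcol' _ h2
    simp only at *
    omega
  · intro i0 j0 k
    rw [prefixCount, prefixCount]
    apply Finset.card_le_card_of_injOn (fun p => (p.1 - 1, p.2))
    · intro p hp
      rw [Finset.mem_coe, Finset.mem_filter] at hp
      obtain ⟨hp1, hp2, hp3⟩ := hp
      rw [hval _ hp1] at hp3
      have hcc := hcol' _ hp1
      have hr : p.1 = mu.colLen p.2 + k + 1 := by omega
      have hmem : (p.1 - 1, p.2) ∈ skewCells lam mu := by
        rw [skew_iff_col]
        omega
      rw [Finset.mem_coe, Finset.mem_filter]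
      beta_reduce
      refine ⟨hmem, ?_, ?_⟩
      · rcases hp2 with h | ⟨h, _⟩
        · left; omega
        · left; omega
      · rw [hval _ hmem]
        simp only
        omega
    · intro p hp q hq h
      rw [Finset.mem_coe, Finset.mem_filter] at hp hq
      obtain ⟨hp1, _, hp3⟩ := hp
      obtain ⟨hq1, _, hq3⟩ := hq
      rw [hval _ hp1] at hp3
      rw [hval _ hq1] at hq3
      have := hcol' _ hp1
      have := hcol' _ hq1
      have h' : (p.1 - 1, p.2) = (q.1 - 1, q.2) := h
      obtain ⟨h1, h2⟩ := Prod.mk.injEq .. ▸ h'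
      have hpq1 : p.1 = q.1 := by
        simp only at *
        omega
      exact Prod.ext hpq1 h2
  · intro k
    rw [content, rowLen_colDiag, colCount]
    apply Finset.card_bij' (fun p _ => p.2) (fun j _ => (mu.colLen j + k, j))
    · intro p hp
      simp only [Finset.mem_filter] at hp
      obtain ⟨hp1, hp2⟩ := hp
      rw [hval _ hp1] at hp2
      have := hcol' _ hp1
      have hj := col_mem_neCols hp1
      rw [mem_neCols] at hj
      simp only [Finset.mem_filter, Finset.mem_range]
      constructor
      · have hj2 : (0, p.2) ∈ lam := by
          apply lam.up_left_mem (Nat.zero_le _) le_rfl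
          rw [Prod.mk.eta]
          exact (mem_skew.mp hp1).1
        have := mem_iff_lt_rowLen.mp hj2
        exact this
      · omega
    · intro j hj
      simp only [Finset.mem_filter, Finset.mem_range] at hj
      have hmem : (mu.colLen j + k, j) ∈ skewCells lam mu := by
        rw [skew_iff_col]
        omega
      simp only [Finset.mem_filter]
      refine ⟨hmem, ?_⟩
      rw [hval _ hmem]
      simp only
      omega
    · intro p hp
      simp only [Finset.mem_filter] at hp
      obtain ⟨hp1, hp2⟩ := hp
      rw [hval _ hp1] at hp2
      have := hcol' _ hp1
      have : p.1 = mu.colLen p.2 + k := by omega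
      rw [← this, Prod.mk.eta]
    · intro j _
      rfl

lemma finite_isLR (lam mu nu : YoungDiagram) : {T : ℕ × ℕ → ℕ | IsLR lam mu nu T}.Finite := by
  classical
  set M := lam.colLen 0 with hM
  let Φ : ({x : ℕ × ℕ // x ∈ skewCells lam mu} → Fin (M + 1)) → (ℕ × ℕ → ℕ) :=
    fun f p => if h : p ∈ skewCells lam mu then (f ⟨p, h⟩ : ℕ) else 0
  apply Set.Finite.subset (Set.finite_range Φ)
  intro T hT
  rw [Set.mem_setOf_eq] at hT
  refine ⟨fun q => ⟨T q, ?_⟩, ?_⟩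
  · have := entry_le_colLen hT q.2
    omega
  · funext p
    by_cases h : p ∈ skewCells lam mu
    · simp only [Φ, dif_pos h]
    · simp only [Φ, dif_neg h]
      exact by_contra fun hc => h ((hT.1.1 p).mpr (Ne.symm hc))

lemma lrCoeff_colDiag_pos {lam mu : YoungDiagram} (hmu : mu ≤ lam) :
    0 < lrCoeff lam mu (colDiag lam mu) := by
  rw [lrCoeff, if_pos hmu]
  rw [Set.ncard_pos (finite_isLR lam mu _)]
  exact ⟨colT lam mu, colT_isLR lam mu⟩

lemma skew_iff_col' {lam mu : YoungDiagram} {p : ℕ × ℕ} :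
    p ∈ skewCells lam mu ↔ mu.colLen p.2 ≤ p.1 ∧ p.1 < lam.colLen p.2 := by
  obtain ⟨r, j⟩ := p
  exact skew_iff_col

lemma skew_iff_row' {lam mu : YoungDiagram} {p : ℕ × ℕ} :
    p ∈ skewCells lam mu ↔ mu.rowLen p.1 ≤ p.2 ∧ p.2 < lam.rowLen p.1 := by
  obtain ⟨r, j⟩ := p
  exact skew_iff_row

lemma colLen_vshift (t : ℕ) (lam : YoungDiagram) (j : ℕ) :
    (vshift t lam).colLen j = lam.colLen j - t := by
  apply nat_eq_of_lt_iff
  intro r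
  rw [← mem_iff_lt_colLen, mem_vshift]
  simp only
  rw [mem_iff_lt_colLen]
  omega

lemma rowLen_hshift (t : ℕ) (lam : YoungDiagram) (r : ℕ) :
    (hshift t lam).rowLen r = lam.rowLen r - t := by
  apply nat_eq_of_lt_iff
  intro j
  rw [← mem_iff_lt_rowLen, mem_hshift]
  simp only
  rw [mem_iff_lt_rowLen]
  omega

lemma mem_skew_vshift {lam mu : YoungDiagram} {p : ℕ × ℕ} :
    p ∈ skewCells (vshift 1 lam) mu ↔ mu.colLen p.2 ≤ p.1 ∧ p.1 + 1 < lam.colLen p.2 := by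
  rw [skew_iff_col', colLen_vshift]
  omega

lemma mem_skew_hshift {lam mu : YoungDiagram} {p : ℕ × ℕ} :
    p ∈ skewCells (hshift 1 lam) mu ↔ mu.rowLen p.1 ≤ p.2 ∧ p.2 + 1 < lam.rowLen p.1 := by
  rw [skew_iff_row', rowLen_hshift]
  omega

/-- The filling of `lam/mu` obtained from a filling of `(vshift 1 lam)/mu` by putting `1`s at
the top of every column and shifting everything else down, adding `1` to every entry. -/
def phiC (lam mu : YoungDiagram) (T : ℕ × ℕ → ℕ) : ℕ × ℕ → ℕ :=
  fun p => if p ∈ skewCells lam mu then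
    (if p.1 = mu.colLen p.2 then 1 else T (p.1 - 1, p.2) + 1) else 0

/-- Inverse of `phiC`. -/
def psiC (lam mu : YoungDiagram) (T' : ℕ × ℕ → ℕ) : ℕ × ℕ → ℕ :=
  fun p => if p ∈ skewCells (vshift 1 lam) mu then T' (p.1 + 1, p.2) - 1 else 0

section ColStep

variable {lam mu nu : YoungDiagram}

lemma nontop_mem {p : ℕ × ℕ} (hp : p ∈ skewCells lam mu) (h : mu.colLen p.2 < p.1) :
    (p.1 - 1, p.2) ∈ skewCells (vshift 1 lam) mu := by
  rw [skew_iff_col'] at hp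
  rw [mem_skew_vshift]
  simp only
  omega

lemma up_mem {p : ℕ × ℕ} (hp : p ∈ skewCells (vshift 1 lam) mu) :
    (p.1 + 1, p.2) ∈ skewCells lam mu := by
  rw [mem_skew_vshift] at hp
  rw [skew_iff_col']
  simp only
  omega

lemma skew_vshift_sub {p : ℕ × ℕ} (hp : p ∈ skewCells (vshift 1 lam) mu) :
    p ∈ skewCells lam mu := by
  rw [mem_skew_vshift] at hp
  rw [skew_iff_col']
  omega

lemma phiC_val_top {T : ℕ × ℕ → ℕ} {p : ℕ × ℕ} (hp : p ∈ skewCells lam mu)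
    (h : p.1 = mu.colLen p.2) : phiC lam mu T p = 1 := by
  rw [phiC, if_pos hp, if_pos h]

lemma phiC_val_nontop {T : ℕ × ℕ → ℕ} {p : ℕ × ℕ} (hp : p ∈ skewCells lam mu)
    (h : p.1 ≠ mu.colLen p.2) : phiC lam mu T p = T (p.1 - 1, p.2) + 1 := by
  rw [phiC, if_pos hp, if_neg h]

lemma phiC_top_iff {T : ℕ × ℕ → ℕ} (hT : IsLR (vshift 1 lam) mu nu T) {p : ℕ × ℕ}
    (hp : p ∈ skewCells lam mu) :
    phiC lam mu T p = 1 ↔ p.1 = mu.colLen p.2 := by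
  constructor
  · intro h
    by_contra hc
    rw [phiC_val_nontop hp hc] at h
    have hcc := skew_iff_col'.mp hp
    have hmem := nontop_mem hp (by omega)
    have := (hT.1.1 _).mp hmem
    omega
  · intro h
    exact phiC_val_top hp h

/-- `phiC` sends LR tableaux of `(vshift 1 lam)/mu` with content `nu` to LR tableaux of
`lam/mu` with content `consDiag (CC lam mu) nu`. -/
lemma phiC_isLR (h1 : mu ≤ vshift 1 lam) (hnu : nu.rowLen 0 ≤ CC lam mu)
    {T : ℕ × ℕ → ℕ} (hT : IsLR (vshift 1 lam) mu nu T) :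
    IsLR lam mu (consDiag (CC lam mu) nu) (phiC lam mu T) := by
  obtain ⟨⟨hsupp, hrow, hcol⟩, hlat, hcont⟩ := hT
  have hsupp' : ∀ p ∈ skewCells lam mu, 1 ≤ phiC lam mu T p := by
    intro p hp
    by_cases h : p.1 = mu.colLen p.2
    · rw [phiC_val_top hp h]
    · rw [phiC_val_nontop hp h]
      omega
  refine ⟨⟨?_, ?_, ?_⟩, ?_, ?_⟩
  · -- support
    intro p
    constructor
    · intro hp
      have := hsupp' p hp
      omega
    · intro hp
      by_contra hc
      rw [phiC, if_neg hc] at hp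
      omega
  · -- rows
    intro i j1 j2 hm1 hm2 hle
    have hc1 := skew_iff_col.mp hm1
    have hc2 := skew_iff_col.mp hm2
    have hanti := mu.colLen_anti j1 j2 hle
    by_cases h : i = mu.colLen j1
    · rw [phiC_val_top hm1 h]
      exact hsupp' _ hm2
    · have h2 : i ≠ mu.colLen j2 := by omega
      rw [phiC_val_nontop hm1 h, phiC_val_nontop hm2 h2]
      simp only
      have hq1 := nontop_mem hm1 (by simp only; omega)
      have hq2 := nontop_mem hm2 (by simp only; omega)
      simp only at hq1 hq2
      have := hrow (i - 1) j1 j2 hq1 hq2 hle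
      omega
  · -- cols
    intro i1 i2 j hm1 hm2 hlt
    have hc1 := skew_iff_col.mp hm1
    have hc2 := skew_iff_col.mp hm2
    have h2 : i2 ≠ mu.colLen j := by omega
    rw [phiC_val_nontop hm2 h2]
    simp only
    have hq2 := nontop_mem hm2 (by simp only; omega)
    simp only at hq2
    by_cases h : i1 = mu.colLen j
    · rw [phiC_val_top hm1 h]
      have := (hsupp _).mp hq2
      omega
    · rw [phiC_val_nontop hm1 h]
      simp only
      have hq1 := nontop_mem hm1 (by simp only; omega)
      simp only at hq1
      have := hcol (i1 - 1) (i2 - 1) j hq1 hq2 (by omega)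
      omega
  · -- lattice
    intro i0 j0 k
    match i0 with
    | 0 =>
      have hz : prefixCount lam mu (phiC lam mu T) 0 j0 (k + 2) = 0 := by
        rw [prefixCount, Finset.card_eq_zero]
        apply Finset.filter_eq_empty_iff.mpr
        intro p hp
        rintro ⟨hpre, hval⟩
        have hcc := skew_iff_col'.mp hp
        have hp1 : p.1 = 0 := by omega
        have htop : p.1 = mu.colLen p.2 := by omega
        rw [phiC_val_top hp htop] at hval
        omega
      omega
    | i0' + 1 =>
      have key : ∀ m, 1 ≤ m → prefixCount lam mu (phiC lam mu T) (i0' + 1) j0 (m + 1) =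
          prefixCount (vshift 1 lam) mu T i0' j0 m := by
        intro m hm
        rw [prefixCount, prefixCount]
        refine Finset.card_bij' (fun p _ => (p.1 - 1, p.2)) (fun q _ => (q.1 + 1, q.2))
          ?hi ?hj ?li ?ri
        case hi =>
          intro p hp
          rw [Finset.mem_filter] at hp
          obtain ⟨hp1, hp2, hp3⟩ := hp
          have htop : p.1 ≠ mu.colLen p.2 := by
            intro hc
            rw [phiC_val_top hp1 hc] at hp3
            omega
          rw [phiC_val_nontop hp1 htop] at hp3
          have hcc := skew_iff_col'.mp hp1
          have hq := nontop_mem hp1 (by omega)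
          rw [Finset.mem_filter]
          refine ⟨hq, ?_, by (try simp only at hp3 ⊢); omega⟩
          show p.1 - 1 < i0' ∨ (p.1 - 1 = i0' ∧ j0 ≤ p.2)
          rcases hp2 with h | ⟨h, h'⟩
          · left; omega
          · right; omega
        case hj =>
          intro q hq
          rw [Finset.mem_filter] at hq
          obtain ⟨hq1, hq2, hq3⟩ := hq
          have hup := up_mem hq1
          have hcc := mem_skew_vshift.mp hq1
          have htop : (q.1 + 1, q.2).1 ≠ mu.colLen (q.1 + 1, q.2).2 := by
            show q.1 + 1 ≠ mu.colLen q.2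
            omega
          rw [Finset.mem_filter]
          refine ⟨hup, ?_, ?_⟩
          · show q.1 + 1 < i0' + 1 ∨ (q.1 + 1 = i0' + 1 ∧ j0 ≤ q.2)
            rcases hq2 with h | ⟨h, h'⟩
            · left; omega
            · right; omega
          · rw [phiC_val_nontop hup htop]
            show T (q.1 + 1 - 1, q.2) + 1 = m + 1
            rw [show q.1 + 1 - 1 = q.1 by omega, Prod.mk.eta]
            omega
        case li =>
          intro p hp
          rw [Finset.mem_filter] at hp
          obtain ⟨hp1, hp2, hp3⟩ := hp
          have htop : p.1 ≠ mu.colLen p.2 := by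
            intro hc
            rw [phiC_val_top hp1 hc] at hp3
            omega
          have hcc := skew_iff_col'.mp hp1
          show (p.1 - 1 + 1, p.2) = p
          rw [show p.1 - 1 + 1 = p.1 by omega, Prod.mk.eta]
        case ri =>
          intro q _
          show (q.1 + 1 - 1, q.2) = q
          rw [show q.1 + 1 - 1 = q.1 by omega, Prod.mk.eta]
      match k with
      | 0 =>
        rw [prefixCount, prefixCount]
        apply Finset.card_le_card_of_injOn (fun p => (mu.colLen p.2, p.2))
        · intro p hp
          rw [Finset.mem_coe, Finset.mem_filter] at hp
          obtain ⟨hp1, hp2, hp3⟩ := hp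
          have htop : p.1 ≠ mu.colLen p.2 := by
            intro hc
            rw [phiC_val_top hp1 hc] at hp3
            omega
          have hcc := skew_iff_col'.mp hp1
          have hmem : (mu.colLen p.2, p.2) ∈ skewCells lam mu := by
            rw [skew_iff_col]
            omega
          rw [Finset.mem_coe, Finset.mem_filter]
          refine ⟨hmem, ?_, phiC_val_top hmem rfl⟩
          show mu.colLen p.2 < i0' + 1 ∨ (mu.colLen p.2 = i0' + 1 ∧ j0 ≤ p.2)
          rcases hp2 with h | ⟨h, h'⟩
          · left; omega
          · left; omega
        · intro p hp q hq h
          rw [Finset.mem_coe, Finset.mem_filter] at hp hq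
          obtain ⟨hp1, _, hp3⟩ := hp
          obtain ⟨hq1, _, hq3⟩ := hq
          have h' : (mu.colLen p.2, p.2) = (mu.colLen q.2, q.2) := h
          obtain ⟨-, h2⟩ := Prod.mk.injEq .. ▸ h'
          have htp : p.1 ≠ mu.colLen p.2 := by
            intro hc
            rw [phiC_val_top hp1 hc] at hp3
            omega
          have htq : q.1 ≠ mu.colLen q.2 := by
            intro hc
            rw [phiC_val_top hq1 hc] at hq3
            omega
          rw [phiC_val_nontop hp1 htp] at hp3
          rw [phiC_val_nontop hq1 htq] at hq3
          have hccp := skew_iff_col'.mp hp1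
          have hccq := skew_iff_col'.mp hq1
          have hqp := nontop_mem hp1 (by omega)
          have hqq := nontop_mem hq1 (by omega)
          apply Prod.ext _ h2
          by_contra hne
          rcases Nat.lt_or_ge p.1 q.1 with hlt | hge
          · have := hcol (p.1 - 1) (q.1 - 1) p.2 hqp (by rw [h2]; exact hqq) (by omega)
            rw [← h2] at hq3
            omega
          · have hlt : q.1 < p.1 := by omega
            have := hcol (q.1 - 1) (p.1 - 1) q.2 hqq (by rw [← h2]; exact hqp) (by omega)
            rw [h2] at hp3
            omega
      | k' + 1 =>
        rw [show k' + 1 + 2 = (k' + 2) + 1 by omega, key (k' + 2) (by omega),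
          show k' + 1 + 1 = (k' + 1) + 1 by omega, key (k' + 1) (by omega)]
        exact hlat i0' j0 k'
  · -- content
    intro k
    match k with
    | 0 =>
      rw [consDiag_rowLen_zero hnu, content, CC]
      refine Finset.card_bij' (fun p _ => p.2) (fun j _ => (mu.colLen j, j)) ?hi ?hj ?li ?ri
      case hi =>
        intro p hp
        rw [Finset.mem_filter] at hp
        obtain ⟨hp1, hp2⟩ := hp
        exact col_mem_neCols hp1
      case hj =>
        intro j hj
        rw [mem_neCols] at hj
        have hmem : (mu.colLen j, j) ∈ skewCells lam mu := by
          rw [skew_iff_col]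
          omega
        rw [Finset.mem_filter]
        exact ⟨hmem, phiC_val_top hmem rfl⟩
      case li =>
        intro p hp
        rw [Finset.mem_filter] at hp
        obtain ⟨hp1, hp2⟩ := hp
        have htop : p.1 = mu.colLen p.2 := by
          by_contra hc
          rw [phiC_val_nontop hp1 hc] at hp2
          have := (hsupp _).mp (nontop_mem hp1 (by
            have := skew_iff_col'.mp hp1
            omega))
          omega
        show (mu.colLen p.2, p.2) = p
        rw [← htop, Prod.mk.eta]
      case ri =>
        intro j _
        rfl
    | k' + 1 =>
      rw [consDiag_rowLen_succ, ← hcont k', content, content]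
      refine Finset.card_bij' (fun p _ => (p.1 - 1, p.2)) (fun q _ => (q.1 + 1, q.2))
        ?hi ?hj ?li ?ri
      case hi =>
        intro p hp
        rw [Finset.mem_filter] at hp
        obtain ⟨hp1, hp2⟩ := hp
        have htop : p.1 ≠ mu.colLen p.2 := by
          intro hc
          rw [phiC_val_top hp1 hc] at hp2
          omega
        rw [phiC_val_nontop hp1 htop] at hp2
        have hcc := skew_iff_col'.mp hp1
        rw [Finset.mem_filter]
        refine ⟨nontop_mem hp1 (by omega), ?_⟩
        show T (p.1 - 1, p.2) = k' + 1
        omega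
      case hj =>
        intro q hq
        rw [Finset.mem_filter] at hq
        obtain ⟨hq1, hq2⟩ := hq
        have hup := up_mem hq1
        have hcc := mem_skew_vshift.mp hq1
        rw [Finset.mem_filter]
        refine ⟨hup, ?_⟩
        rw [phiC_val_nontop hup (by show q.1 + 1 ≠ mu.colLen q.2; omega)]
        show T (q.1 + 1 - 1, q.2) + 1 = k' + 1 + 1
        rw [show q.1 + 1 - 1 = q.1 by omega, Prod.mk.eta]
        omega
      case li =>
        intro p hp
        rw [Finset.mem_filter] at hp
        obtain ⟨hp1, hp2⟩ := hp
        have htop : p.1 ≠ mu.colLen p.2 := by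
          intro hc
          rw [phiC_val_top hp1 hc] at hp2
          omega
        have hcc := skew_iff_col'.mp hp1
        show (p.1 - 1 + 1, p.2) = p
        rw [show p.1 - 1 + 1 = p.1 by omega, Prod.mk.eta]
      case ri =>
        intro q _
        show (q.1 + 1 - 1, q.2) = q
        rw [show q.1 + 1 - 1 = q.1 by omega, Prod.mk.eta]

end ColStep

section ColStep2

variable {lam mu nu : YoungDiagram}

/-- In an LR tableau of `lam/mu` with content `consDiag (CC lam mu) nu`, the top cell of
every nonempty column carries entry 1, and the `1`s appear nowhere else. -/
lemma tops_one (hnu : nu.rowLen 0 ≤ CC lam mu)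
    {T' : ℕ × ℕ → ℕ} (hT' : IsLR lam mu (consDiag (CC lam mu) nu) T') :
    ∀ p ∈ skewCells lam mu, (T' p = 1 ↔ p.1 = mu.colLen p.2) := by
  obtain ⟨⟨hsupp, hrow, hcol⟩, hlat, hcont⟩ := hT'
  -- every 1-cell is a top cell
  have hone_top : ∀ p ∈ skewCells lam mu, T' p = 1 → p.1 = mu.colLen p.2 := by
    intro p hp h1
    by_contra hc
    have hcc := skew_iff_col'.mp hp
    have habove : (p.1 - 1, p.2) ∈ skewCells lam mu := by
      rw [skew_iff_col]
      omega
    have hlt := hcol (p.1 - 1) p.1 p.2 habove (by rw [Prod.mk.eta]; exact hp) (by omega)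
    rw [Prod.mk.eta] at hlt
    have := (hsupp _).mp habove
    omega
  have hcard : ((skewCells lam mu).filter fun p => T' p = 1).card = CC lam mu := by
    have := hcont 0
    rw [content] at this
    rw [this, consDiag_rowLen_zero hnu]
  -- surjectivity onto nonempty columns
  have hsurj : ∀ j ∈ neCols lam mu, T' (mu.colLen j, j) = 1 := by
    have hinj : ∀ p ∈ ((skewCells lam mu).filter fun p => T' p = 1),
        ∀ q ∈ ((skewCells lam mu).filter fun p => T' p = 1),
        p.2 = q.2 → p = q := by
      intro p hp q hq hpq
      rw [Finset.mem_filter] at hp hq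
      have h1 := hone_top p hp.1 hp.2
      have h2 := hone_top q hq.1 hq.2
      apply Prod.ext _ hpq
      rw [h1, h2, hpq]
    have hmaps : ∀ p ∈ ((skewCells lam mu).filter fun p => T' p = 1), p.2 ∈ neCols lam mu := by
      intro p hp
      rw [Finset.mem_filter] at hp
      exact col_mem_neCols hp.1
    have hcardle : (neCols lam mu).card ≤
        ((skewCells lam mu).filter fun p => T' p = 1).card := by
      rw [hcard, CC]
    have := Finset.surj_on_of_inj_on_of_card_le (fun p _ => p.2) hmaps
      (fun p q hp hq h => hinj p hp q hq h) hcardle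
    intro j hj
    obtain ⟨p, hp, hpj⟩ := this j hj
    rw [Finset.mem_filter] at hp
    have htop := hone_top p hp.1 hp.2
    have : p = (mu.colLen j, j) := by
      apply Prod.ext
      · rw [htop, hpj]
      · exact hpj.symm
    rw [← this]
    exact hp.2
  intro p hp
  constructor
  · exact hone_top p hp
  · intro htop
    have hj := col_mem_neCols hp
    have := hsurj p.2 hj
    rw [show (mu.colLen p.2, p.2) = p from Prod.ext htop.symm rfl] at this
    exact this

lemma psiC_val {T' : ℕ × ℕ → ℕ} {p : ℕ × ℕ} (hp : p ∈ skewCells (vshift 1 lam) mu) :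
    psiC lam mu T' p = T' (p.1 + 1, p.2) - 1 := by
  rw [psiC, if_pos hp]

/-- Entries strictly below the top of a column are at least 2. -/
lemma nontop_ge_two {T' : ℕ × ℕ → ℕ} (hT' : IsSSYT lam mu T') {p : ℕ × ℕ}
    (hp : p ∈ skewCells lam mu) (h : mu.colLen p.2 < p.1) : 2 ≤ T' p := by
  obtain ⟨hsupp, hrow, hcol⟩ := hT'
  have hcc := skew_iff_col'.mp hp
  have habove : (p.1 - 1, p.2) ∈ skewCells lam mu := by
    rw [skew_iff_col]
    omega
  have hlt := hcol (p.1 - 1) p.1 p.2 habove (by rw [Prod.mk.eta]; exact hp) (by omega)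
  rw [Prod.mk.eta] at hlt
  have := (hsupp _).mp habove
  omega

lemma psiC_isLR (h1 : mu ≤ vshift 1 lam) (hnu : nu.rowLen 0 ≤ CC lam mu)
    {T' : ℕ × ℕ → ℕ} (hT' : IsLR lam mu (consDiag (CC lam mu) nu) T') :
    IsLR (vshift 1 lam) mu nu (psiC lam mu T') := by
  have htops := tops_one hnu hT'
  obtain ⟨⟨hsupp, hrow, hcol⟩, hlat, hcont⟩ := hT'
  have hge2 : ∀ p ∈ skewCells (vshift 1 lam) mu, 2 ≤ T' (p.1 + 1, p.2) := by
    intro p hp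
    have hcc := mem_skew_vshift.mp hp
    exact nontop_ge_two ⟨hsupp, hrow, hcol⟩ (up_mem hp) (by show mu.colLen p.2 < p.1 + 1; omega)
  -- the value identity
  have hval : ∀ p ∈ skewCells (vshift 1 lam) mu, ∀ m,
      (psiC lam mu T' p = m ↔ T' (p.1 + 1, p.2) = m + 1) ∨ 1 ≤ m → True := fun _ _ _ _ => trivial
  refine ⟨⟨?_, ?_, ?_⟩, ?_, ?_⟩
  · intro p
    constructor
    · intro hp
      rw [psiC_val hp]
      have := hge2 p hp
      omega
    · intro hp
      by_contra hc
      rw [psiC, if_neg hc] at hp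
      omega
  · intro i j1 j2 hm1 hm2 hle
    rw [psiC_val hm1, psiC_val hm2]
    have := hrow (i + 1) j1 j2 (up_mem hm1) (up_mem hm2) hle
    simp only at this ⊢
    omega
  · intro i1 i2 j hm1 hm2 hlt
    rw [psiC_val hm1, psiC_val hm2]
    have := hcol (i1 + 1) (i2 + 1) j (up_mem hm1) (up_mem hm2) (by omega)
    have := hge2 _ hm1
    simp only at *
    omega
  · -- lattice
    intro i0 j0 k
    have key : ∀ m, 1 ≤ m → prefixCount (vshift 1 lam) mu (psiC lam mu T') i0 j0 m =
        prefixCount lam mu T' (i0 + 1) j0 (m + 1) := by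
      intro m hm
      rw [prefixCount, prefixCount]
      refine Finset.card_bij' (fun q _ => (q.1 + 1, q.2)) (fun p _ => (p.1 - 1, p.2))
        ?hi ?hj ?li ?ri
      case hi =>
        intro q hq
        rw [Finset.mem_filter] at hq
        obtain ⟨hq1, hq2, hq3⟩ := hq
        rw [psiC_val hq1] at hq3
        have h2 := hge2 _ hq1
        rw [Finset.mem_filter]
        refine ⟨up_mem hq1, ?_, by show T' (q.1 + 1, q.2) = m + 1; omega⟩
        show q.1 + 1 < i0 + 1 ∨ (q.1 + 1 = i0 + 1 ∧ j0 ≤ q.2)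
        rcases hq2 with h | ⟨h, h'⟩
        · left; omega
        · right; omega
      case hj =>
        intro p hp
        rw [Finset.mem_filter] at hp
        obtain ⟨hp1, hp2, hp3⟩ := hp
        have htop : p.1 ≠ mu.colLen p.2 := by
          intro hc
          rw [(htops p hp1).mpr hc] at hp3
          omega
        have hcc := skew_iff_col'.mp hp1
        have hq := nontop_mem hp1 (by omega)
        rw [Finset.mem_filter]
        refine ⟨hq, ?_, ?_⟩
        · show p.1 - 1 < i0 ∨ (p.1 - 1 = i0 ∧ j0 ≤ p.2)
          rcases hp2 with h | ⟨h, h'⟩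
          · left; omega
          · right; omega
        · rw [psiC_val hq]
          show T' (p.1 - 1 + 1, p.2) - 1 = m
          rw [show p.1 - 1 + 1 = p.1 by omega, Prod.mk.eta]
          omega
      case li =>
        intro q _
        show (q.1 + 1 - 1, q.2) = q
        rw [show q.1 + 1 - 1 = q.1 by omega, Prod.mk.eta]
      case ri =>
        intro p hp
        rw [Finset.mem_filter] at hp
        obtain ⟨hp1, hp2, hp3⟩ := hp
        have htop : p.1 ≠ mu.colLen p.2 := by
          intro hc
          rw [(htops p hp1).mpr hc] at hp3
          omega
        have hcc := skew_iff_col'.mp hp1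
        show (p.1 - 1 + 1, p.2) = p
        rw [show p.1 - 1 + 1 = p.1 by omega, Prod.mk.eta]
    rw [key (k + 2) (by omega), key (k + 1) (by omega)]
    exact hlat (i0 + 1) j0 (k + 1)
  · -- content
    intro k
    have hkey : content (vshift 1 lam) mu (psiC lam mu T') (k + 1) =
        content lam mu T' (k + 2) := by
      rw [content, content]
      refine Finset.card_bij' (fun q _ => (q.1 + 1, q.2)) (fun p _ => (p.1 - 1, p.2))
        ?hi ?hj ?li ?ri
      case hi =>
        intro q hq
        rw [Finset.mem_filter] at hq
        obtain ⟨hq1, hq3⟩ := hq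
        rw [psiC_val hq1] at hq3
        have h2 := hge2 _ hq1
        rw [Finset.mem_filter]
        exact ⟨up_mem hq1, by show T' (q.1 + 1, q.2) = k + 2; omega⟩
      case hj =>
        intro p hp
        rw [Finset.mem_filter] at hp
        obtain ⟨hp1, hp3⟩ := hp
        have htop : p.1 ≠ mu.colLen p.2 := by
          intro hc
          rw [(htops p hp1).mpr hc] at hp3
          omega
        have hcc := skew_iff_col'.mp hp1
        have hq := nontop_mem hp1 (by omega)
        rw [Finset.mem_filter]
        refine ⟨hq, ?_⟩
        rw [psiC_val hq]
        show T' (p.1 - 1 + 1, p.2) - 1 = k + 1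
        rw [show p.1 - 1 + 1 = p.1 by omega, Prod.mk.eta]
        omega
      case li =>
        intro q _
        show (q.1 + 1 - 1, q.2) = q
        rw [show q.1 + 1 - 1 = q.1 by omega, Prod.mk.eta]
      case ri =>
        intro p hp
        rw [Finset.mem_filter] at hp
        obtain ⟨hp1, hp3⟩ := hp
        have htop : p.1 ≠ mu.colLen p.2 := by
          intro hc
          rw [(htops p hp1).mpr hc] at hp3
          omega
        have hcc := skew_iff_col'.mp hp1
        show (p.1 - 1 + 1, p.2) = p
        rw [show p.1 - 1 + 1 = p.1 by omega, Prod.mk.eta]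
    rw [hkey]
    have := hcont (k + 1)
    rw [consDiag_rowLen_succ] at this
    exact this

lemma psiC_phiC (h1 : mu ≤ vshift 1 lam) {T : ℕ × ℕ → ℕ}
    (hT : IsLR (vshift 1 lam) mu nu T) : psiC lam mu (phiC lam mu T) = T := by
  funext p
  by_cases hp : p ∈ skewCells (vshift 1 lam) mu
  · rw [psiC_val hp]
    have hup := up_mem hp
    have hcc := mem_skew_vshift.mp hp
    rw [phiC_val_nontop hup (by show p.1 + 1 ≠ mu.colLen p.2; omega)]
    show T (p.1 + 1 - 1, p.2) + 1 - 1 = T p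
    rw [show p.1 + 1 - 1 = p.1 by omega, Prod.mk.eta]
    omega
  · rw [psiC, if_neg hp]
    by_contra hc
    exact hp ((hT.1.1 p).mpr (fun h => hc h.symm))

lemma phiC_psiC (h1 : mu ≤ vshift 1 lam) (hnu : nu.rowLen 0 ≤ CC lam mu)
    {T' : ℕ × ℕ → ℕ} (hT' : IsLR lam mu (consDiag (CC lam mu) nu) T') :
    phiC lam mu (psiC lam mu T') = T' := by
  have htops := tops_one hnu hT'
  funext p
  by_cases hp : p ∈ skewCells lam mu
  · by_cases htop : p.1 = mu.colLen p.2
    · rw [phiC_val_top hp htop, ((htops p hp).mpr htop).symm]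
    · rw [phiC_val_nontop hp htop]
      have hcc := skew_iff_col'.mp hp
      have hq := nontop_mem hp (by omega)
      rw [psiC_val hq]
      show T' (p.1 - 1 + 1, p.2) - 1 + 1 = T' p
      rw [show p.1 - 1 + 1 = p.1 by omega, Prod.mk.eta]
      have := nontop_ge_two hT'.1 hp (by omega)
      omega
  · rw [phiC, if_neg hp]
    by_contra hc
    exact hp ((hT'.1.1 p).mpr (fun h => hc h.symm))

/-- Column removal step for the Littlewood–Richardson coefficients. -/
lemma colStep (h1 : mu ≤ vshift 1 lam) (hnu : nu.rowLen 0 ≤ CC lam mu) :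
    lrCoeff (vshift 1 lam) mu nu = lrCoeff lam mu (consDiag (CC lam mu) nu) := by
  have hmu : mu ≤ lam := le_trans h1 vshift_le
  rw [lrCoeff, if_pos h1, lrCoeff, if_pos hmu]
  have hbij : Set.BijOn (phiC lam mu)
      {T : ℕ × ℕ → ℕ | IsLR (vshift 1 lam) mu nu T}
      {T : ℕ × ℕ → ℕ | IsLR lam mu (consDiag (CC lam mu) nu) T} := by
    refine ⟨?_, ?_, ?_⟩
    · intro T hT
      exact phiC_isLR h1 hnu hT
    · intro T1 h1' T2 h2' heq
      rw [← psiC_phiC h1 h1', ← psiC_phiC h1 h2', heq]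
    · intro T' hT'
      exact ⟨psiC lam mu T', psiC_isLR h1 hnu hT', phiC_psiC h1 hnu hT'⟩
  rw [← hbij.image_eq, Set.ncard_image_of_injOn hbij.injOn]

/-- Vanishing case of the column removal step. -/
lemma colStep_zero (h1 : mu ≤ vshift 1 lam) (hnu : CC lam mu < nu.rowLen 0) :
    lrCoeff (vshift 1 lam) mu nu = 0 := by
  rw [lrCoeff, if_pos h1]
  have hempty : {T : ℕ × ℕ → ℕ | IsLR (vshift 1 lam) mu nu T} = ∅ := by
    rw [Set.eq_empty_iff_forall_notMem]
    intro T hT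
    rw [Set.mem_setOf_eq] at hT
    have hb := rowLen_le_CC_of_isLR hT
    have hsub : CC (vshift 1 lam) mu ≤ CC lam mu := by
      apply Finset.card_le_card
      intro j hj
      rw [mem_neCols] at hj ⊢
      rw [colLen_vshift] at hj
      omega
    omega
  rw [hempty, Set.ncard_empty]

end ColStep2

lemma lr_nonempty_of_lrCoeff_ne_zero {lam mu nu : YoungDiagram}
    (h : lrCoeff lam mu nu ≠ 0) : ∃ T, IsLR lam mu nu T := by
  rw [lrCoeff] at h
  split_ifs at h with hle
  · have : {T : ℕ × ℕ → ℕ | IsLR lam mu nu T}.Nonempty := by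
      by_contra hc
      rw [Set.not_nonempty_iff_eq_empty] at hc
      rw [hc, Set.ncard_empty] at h
      exact h rfl
    obtain ⟨T, hT⟩ := this
    exact ⟨T, hT⟩
  · exact absurd rfl h

lemma CC_eq_of_schurEq {lam mu alp bet : YoungDiagram} (h : SchurEq lam mu alp bet)
    (hmu : mu ≤ lam) (hbet : bet ≤ alp) : CC lam mu = CC alp bet := by
  have key : ∀ lam' mu' alp' bet' : YoungDiagram, SchurEq lam' mu' alp' bet' →
      mu' ≤ lam' → CC lam' mu' ≤ CC alp' bet' := by
    intro lam' mu' alp' bet' h' hmu'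
    have hpos := lrCoeff_colDiag_pos hmu'
    have hne : lrCoeff alp' bet' (colDiag lam' mu') ≠ 0 := by
      rw [← h' (colDiag lam' mu')]
      omega
    obtain ⟨T, hT⟩ := lr_nonempty_of_lrCoeff_ne_zero hne
    have := rowLen_le_CC_of_isLR hT
    rw [rowLen_colDiag, colCount_zero] at this
    exact this
  have h' : SchurEq alp bet lam mu := fun nu => (h nu).symm
  exact le_antisymm (key _ _ _ _ h hmu) (key _ _ _ _ h' hbet)

lemma schurEq_vstep {lam mu alp bet : YoungDiagram} (h : SchurEq lam mu alp bet)
    (h1 : mu ≤ vshift 1 lam) (h2 : bet ≤ vshift 1 alp) :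
    SchurEq (vshift 1 lam) mu (vshift 1 alp) bet := by
  have hmu : mu ≤ lam := le_trans h1 vshift_le
  have hbet : bet ≤ alp := le_trans h2 vshift_le
  have hC : CC alp bet = CC lam mu := (CC_eq_of_schurEq h hmu hbet).symm
  intro nu
  by_cases hnu : nu.rowLen 0 ≤ CC lam mu
  · rw [colStep h1 hnu, colStep h2 (by omega)]
    rw [hC]
    exact h _
  · rw [colStep_zero h1 (by omega), colStep_zero h2 (by omega)]

lemma schurEq_vshift {mu bet : YoungDiagram} :
    ∀ (i : ℕ) (lam alp : YoungDiagram), mu ≤ vshift i lam → bet ≤ vshift i alp →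
    SchurEq lam mu alp bet → SchurEq (vshift i lam) mu (vshift i alp) bet := by
  intro i
  induction i with
  | zero =>
    intro lam alp _ _ h
    rw [vshift_zero, vshift_zero]
    exact h
  | succ i ih =>
    intro lam alp hmu hbet h
    have hmu1 : mu ≤ vshift 1 lam := le_trans hmu vshift_succ_le
    have hbet1 : bet ≤ vshift 1 alp := le_trans hbet vshift_succ_le
    have hstep := schurEq_vstep h hmu1 hbet1
    have hmu' : mu ≤ vshift i (vshift 1 lam) := by rw [vshift_vshift]; exact hmu
    have hbet' : bet ≤ vshift i (vshift 1 alp) := by rw [vshift_vshift]; exact hbet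
    have := ih (vshift 1 lam) (vshift 1 alp) hmu' hbet' hstep
    rw [vshift_vshift, vshift_vshift] at this
    exact this

/-- The filling of `lam/mu` obtained from a filling of `(hshift 1 lam)/mu` by putting entry
`t` at the end of the `t`-th nonempty row. -/
def phiR (lam mu : YoungDiagram) (T : ℕ × ℕ → ℕ) : ℕ × ℕ → ℕ :=
  fun p => if p ∈ skewCells lam mu then
    (if p.2 + 1 = lam.rowLen p.1 then gRow lam mu p.1 + 1 else T p) else 0

/-- Inverse of `phiR`: restriction. -/
def psiR (lam mu : YoungDiagram) (T' : ℕ × ℕ → ℕ) : ℕ × ℕ → ℕ :=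
  fun p => if p ∈ skewCells (hshift 1 lam) mu then T' p else 0

section RowStep

variable {lam mu nu : YoungDiagram}

lemma skew_hshift_eq_filter (lam mu : YoungDiagram) : skewCells (hshift 1 lam) mu
    = (skewCells lam mu).filter (fun p => p.2 + 1 < lam.rowLen p.1) := by
  apply Finset.ext
  intro p
  rw [mem_skew_hshift, Finset.mem_filter, skew_iff_row']
  omega

lemma kept_mem {p : ℕ × ℕ} (hp : p ∈ skewCells lam mu) (h : p.2 + 1 ≠ lam.rowLen p.1) :
    p ∈ skewCells (hshift 1 lam) mu := by
  rw [mem_skew_hshift]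
  rw [skew_iff_row'] at hp
  omega

lemma skew_hshift_sub {p : ℕ × ℕ} (hp : p ∈ skewCells (hshift 1 lam) mu) :
    p ∈ skewCells lam mu := by
  rw [mem_skew_hshift] at hp
  rw [skew_iff_row']
  omega

lemma gRow_hshift_le (lam mu : YoungDiagram) (r : ℕ) :
    gRow (hshift 1 lam) mu r ≤ gRow lam mu r := by
  apply Finset.card_le_card
  intro x hx
  rw [Finset.mem_filter] at hx ⊢
  obtain ⟨hx1, hx2⟩ := hx
  rw [mem_neRows, rowLen_hshift] at hx1
  exact ⟨mem_neRows.mpr (by omega), hx2⟩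

lemma RR_hshift_le (lam mu : YoungDiagram) : RR (hshift 1 lam) mu ≤ RR lam mu := by
  apply Finset.card_le_card
  intro x hx
  rw [mem_neRows, rowLen_hshift] at hx
  exact mem_neRows.mpr (by omega)

lemma phiR_val_rem {T : ℕ × ℕ → ℕ} {p : ℕ × ℕ} (hp : p ∈ skewCells lam mu)
    (h : p.2 + 1 = lam.rowLen p.1) : phiR lam mu T p = gRow lam mu p.1 + 1 := by
  rw [phiR, if_pos hp, if_pos h]

lemma phiR_val_kept {T : ℕ × ℕ → ℕ} {p : ℕ × ℕ} (hp : p ∈ skewCells lam mu)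
    (h : p.2 + 1 ≠ lam.rowLen p.1) : phiR lam mu T p = T p := by
  rw [phiR, if_pos hp, if_neg h]

/-- An entry bound for fillings of `(hshift 1 lam)/mu`, in terms of `gRow lam mu`. -/
lemma entry_le_gRow' {T : ℕ × ℕ → ℕ} (hT : IsLR (hshift 1 lam) mu nu T)
    {p : ℕ × ℕ} (hp : p ∈ skewCells (hshift 1 lam) mu) :
    T p ≤ gRow lam mu p.1 + 1 := by
  have := entry_le_gRow hT (T p) p hp rfl
  have := gRow_hshift_le lam mu p.1
  omega

/-- Number of removed cells with forced entry `m` within the reading prefix `(i, j)`. -/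
def remCount (lam mu : YoungDiagram) (i j m : ℕ) : ℕ :=
  ((skewCells lam mu).filter fun p => (p.1 < i ∨ (p.1 = i ∧ j ≤ p.2)) ∧
    (p.2 + 1 = lam.rowLen p.1 ∧ gRow lam mu p.1 + 1 = m)).card

/-- Total number of removed cells with forced entry `m`. -/
def remTotal (lam mu : YoungDiagram) (m : ℕ) : ℕ :=
  ((skewCells lam mu).filter fun p =>
    p.2 + 1 = lam.rowLen p.1 ∧ gRow lam mu p.1 + 1 = m).card

lemma phiR_prefix_split (T : ℕ × ℕ → ℕ) (i0 j0 m : ℕ) :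
    prefixCount lam mu (phiR lam mu T) i0 j0 m
    = prefixCount (hshift 1 lam) mu T i0 j0 m + remCount lam mu i0 j0 m := by
  rw [prefixCount, prefixCount, remCount, ← Finset.card_union_of_disjoint]
  · congr 1
    apply Finset.ext
    intro p
    rw [Finset.mem_union, Finset.mem_filter, Finset.mem_filter, Finset.mem_filter,
      skew_hshift_eq_filter, Finset.mem_filter]
    constructor
    · rintro ⟨hp, hQ, hval⟩
      by_cases hrem : p.2 + 1 = lam.rowLen p.1
      · right
        rw [phiR_val_rem hp hrem] at hval
        exact ⟨hp, hQ, hrem, hval⟩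
      · left
        rw [phiR_val_kept hp hrem] at hval
        have := skew_iff_row'.mp hp
        exact ⟨⟨hp, by omega⟩, hQ, hval⟩
    · rintro (⟨⟨hp, hkept⟩, hQ, hval⟩ | ⟨hp, hQ, hrem, hval⟩)
      · refine ⟨hp, hQ, ?_⟩
        rw [phiR_val_kept hp (by omega)]
        exact hval
      · refine ⟨hp, hQ, ?_⟩
        rw [phiR_val_rem hp hrem]
        exact hval
  · rw [Finset.disjoint_left]
    intro p hp hp'
    rw [skew_hshift_eq_filter, Finset.mem_filter, Finset.mem_filter] at hp
    rw [Finset.mem_filter] at hp'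
    obtain ⟨⟨_, hkept⟩, _⟩ := hp
    obtain ⟨_, _, hrem, _⟩ := hp'
    omega

lemma phiR_content_split (T : ℕ × ℕ → ℕ) (m : ℕ) :
    content lam mu (phiR lam mu T) m
    = content (hshift 1 lam) mu T m + remTotal lam mu m := by
  rw [content, content, remTotal, ← Finset.card_union_of_disjoint]
  · congr 1
    apply Finset.ext
    intro p
    rw [Finset.mem_union, Finset.mem_filter, Finset.mem_filter, Finset.mem_filter,
      skew_hshift_eq_filter, Finset.mem_filter]
    constructor
    · rintro ⟨hp, hval⟩
      by_cases hrem : p.2 + 1 = lam.rowLen p.1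
      · right
        rw [phiR_val_rem hp hrem] at hval
        exact ⟨hp, hrem, hval⟩
      · left
        rw [phiR_val_kept hp hrem] at hval
        have := skew_iff_row'.mp hp
        exact ⟨⟨hp, by omega⟩, hval⟩
    · rintro (⟨⟨hp, hkept⟩, hval⟩ | ⟨hp, hrem, hval⟩)
      · refine ⟨hp, ?_⟩
        rw [phiR_val_kept hp (by omega)]
        exact hval
      · refine ⟨hp, ?_⟩
        rw [phiR_val_rem hp hrem]
        exact hval
  · rw [Finset.disjoint_left]
    intro p hp hp'
    rw [skew_hshift_eq_filter, Finset.mem_filter, Finset.mem_filter] at hp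
    rw [Finset.mem_filter] at hp'
    obtain ⟨⟨_, hkept⟩, _⟩ := hp
    obtain ⟨_, hrem, _⟩ := hp'
    omega

lemma remCount_le_one (i0 j0 m : ℕ) : remCount lam mu i0 j0 m ≤ 1 := by
  rw [remCount, Finset.card_le_one]
  intro p hp q hq
  rw [Finset.mem_filter] at hp hq
  obtain ⟨hp1, _, hp2, hp3⟩ := hp
  obtain ⟨hq1, _, hq2, hq3⟩ := hq
  have h1 : p.1 = q.1 :=
    gRow_inj (row_mem_neRows hp1) (row_mem_neRows hq1) (by omega)
  apply Prod.ext h1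
  rw [h1] at hp2
  omega

lemma remTotal_eq (k : ℕ) :
    remTotal lam mu (k + 1) = if k < RR lam mu then 1 else 0 := by
  rw [remTotal]
  split_ifs with hk
  · apply le_antisymm
    · rw [Finset.card_le_one]
      intro p hp q hq
      rw [Finset.mem_filter] at hp hq
      obtain ⟨hp1, hp2, hp3⟩ := hp
      obtain ⟨hq1, hq2, hq3⟩ := hq
      have h1 : p.1 = q.1 :=
        gRow_inj (row_mem_neRows hp1) (row_mem_neRows hq1) (by omega)
      apply Prod.ext h1
      rw [h1] at hp2
      omega
    · rw [Nat.succ_le_iff, Finset.card_pos]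
      obtain ⟨r, hr, hgr⟩ := gRow_surj k hk
      have hmem : (r, lam.rowLen r - 1) ∈ skewCells lam mu := by
        rw [skew_iff_row]
        rw [mem_neRows] at hr
        omega
      refine ⟨(r, lam.rowLen r - 1), ?_⟩
      rw [Finset.mem_filter]
      refine ⟨hmem, ?_, by simpa using hgr⟩
      show lam.rowLen r - 1 + 1 = lam.rowLen r
      rw [mem_neRows] at hr
      omega
  · rw [Finset.card_eq_zero]
    apply Finset.filter_eq_empty_iff.mpr
    intro p hp
    rintro ⟨_, hg⟩
    have := gRow_lt_RR (row_mem_neRows hp)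
    omega

lemma remCount_mono (i0 j0 k : ℕ) (h : 0 < remCount lam mu i0 j0 (k + 2)) :
    0 < remCount lam mu i0 j0 (k + 1) := by
  rw [remCount, Finset.card_pos] at h ⊢
  obtain ⟨p, hp⟩ := h
  rw [Finset.mem_filter] at hp
  obtain ⟨hp1, hpre, hrem, hg⟩ := hp
  have hr' : p.1 ∈ neRows lam mu := row_mem_neRows hp1
  have hklt : k < RR lam mu := by
    have := gRow_lt_RR hr'
    omega
  obtain ⟨r'', hr'', hg''⟩ := gRow_surj k hklt
  have hlt : r'' < p.1 := by
    by_contra hc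
    have := gRow_mono (lam := lam) (mu := mu) (show p.1 ≤ r'' by omega)
    omega
  have hmem : (r'', lam.rowLen r'' - 1) ∈ skewCells lam mu := by
    rw [skew_iff_row]
    rw [mem_neRows] at hr''
    omega
  refine ⟨(r'', lam.rowLen r'' - 1), ?_⟩
  rw [Finset.mem_filter]
  refine ⟨hmem, ?_, ?_, by simpa using hg''⟩
  · left
    show r'' < i0
    rcases hpre with h | ⟨h, _⟩
    · omega
    · omega
  · show lam.rowLen r'' - 1 + 1 = lam.rowLen r''
    rw [mem_neRows] at hr''
    omega

lemma rowLen_zero_of_ge {nu : YoungDiagram} {k : ℕ} (h : nu.colLen 0 ≤ k) :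
    nu.rowLen k = 0 := by
  by_contra hc
  have := rowLen_pos_iff.mp (Nat.pos_of_ne_zero hc)
  omega

lemma phiR_isLR (h1 : mu ≤ hshift 1 lam) (hnu : nu.colLen 0 ≤ RR lam mu)
    {T : ℕ × ℕ → ℕ} (hT : IsLR (hshift 1 lam) mu nu T) :
    IsLR lam mu (addOneDiag (RR lam mu) nu) (phiR lam mu T) := by
  have hTfull := hT
  obtain ⟨⟨hsupp, hrow, hcol⟩, hlat, hcont⟩ := hT
  refine ⟨⟨?_, ?_, ?_⟩, ?_, ?_⟩
  · -- support
    intro p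
    constructor
    · intro hp
      by_cases hrem : p.2 + 1 = lam.rowLen p.1
      · rw [phiR_val_rem hp hrem]
        omega
      · rw [phiR_val_kept hp hrem]
        exact (hsupp p).mp (kept_mem hp hrem)
    · intro hp
      by_contra hc
      rw [phiR, if_neg hc] at hp
      omega
  · -- rows
    intro i j1 j2 hm1 hm2 hle
    have hr1 := skew_iff_row.mp hm1
    have hr2 := skew_iff_row.mp hm2
    by_cases hrem2 : j2 + 1 = lam.rowLen i
    · rw [phiR_val_rem hm2 hrem2]
      by_cases hrem1 : j1 + 1 = lam.rowLen i
      · rw [phiR_val_rem hm1 hrem1]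
      · rw [phiR_val_kept hm1 hrem1]
        have := entry_le_gRow' hTfull (kept_mem hm1 hrem1)
        simp only at this ⊢
        omega
    · have hrem1 : ¬ j1 + 1 = lam.rowLen i := by omega
      rw [phiR_val_kept hm1 hrem1, phiR_val_kept hm2 hrem2]
      exact hrow i j1 j2 (kept_mem hm1 hrem1) (kept_mem hm2 hrem2) hle
  · -- cols
    intro i1 i2 j hm1 hm2 hlt
    have hr1 := skew_iff_row.mp hm1
    have hr2 := skew_iff_row.mp hm2
    have hanti := lam.rowLen_anti i1 i2 (by omega)
    have hglt : gRow lam mu i1 < gRow lam mu i2 := gRow_lt (row_mem_neRows hm1) hlt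
    by_cases hrem2 : j + 1 = lam.rowLen i2
    · rw [phiR_val_rem hm2 hrem2]
      by_cases hrem1 : j + 1 = lam.rowLen i1
      · rw [phiR_val_rem hm1 hrem1]
        simp only
        omega
      · rw [phiR_val_kept hm1 hrem1]
        have := entry_le_gRow' hTfull (kept_mem hm1 hrem1)
        simp only at this ⊢
        omega
    · -- i2 kept; then i1 kept
      have hrem1 : ¬ j + 1 = lam.rowLen i1 := by omega
      rw [phiR_val_kept hm1 hrem1, phiR_val_kept hm2 hrem2]
      exact hcol i1 i2 j (kept_mem hm1 hrem1) (kept_mem hm2 hrem2) hlt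
  · -- lattice
    intro i0 j0 k
    rw [phiR_prefix_split, phiR_prefix_split]
    have hlat' := hlat i0 j0 k
    have hle1 := remCount_le_one (lam := lam) (mu := mu) i0 j0 (k + 2)
    have hle2 := remCount_le_one (lam := lam) (mu := mu) i0 j0 (k + 1)
    by_cases hD : 0 < remCount lam mu i0 j0 (k + 2)
    · have := remCount_mono i0 j0 k hD
      omega
    · omega
  · -- content
    intro k
    rw [phiR_content_split, remTotal_eq, hcont k, addOneDiag_rowLen hnu]
    split_ifs with hk
    · rfl
    · rw [rowLen_zero_of_ge (by omega)]

end RowStep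

section Forcing

variable {lam mu nu : YoungDiagram}

/-- Reading-order key. -/
def rkey (lam : YoungDiagram) (p : ℕ × ℕ) : ℕ :=
  p.1 * (lam.rowLen 0 + 1) + (lam.rowLen 0 - p.2)

lemma cell_col_lt {p : ℕ × ℕ} (hp : p ∈ skewCells lam mu) : p.2 < lam.rowLen 0 := by
  have h := (mem_skew.mp hp).1
  have h2 : (p.1, p.2) ∈ lam := by rw [Prod.mk.eta]; exact h
  rw [mem_iff_lt_rowLen] at h2
  have := lam.rowLen_anti 0 p.1 (Nat.zero_le _)
  omega

lemma rkey_lt_iff {p q : ℕ × ℕ} (hp : p ∈ skewCells lam mu) (hq : q ∈ skewCells lam mu) :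
    rkey lam p < rkey lam q ↔ (p.1 < q.1 ∨ (p.1 = q.1 ∧ q.2 < p.2)) := by
  have h1 := cell_col_lt hp
  have h2 := cell_col_lt hq
  rw [rkey, rkey]
  constructor
  · intro h
    rcases Nat.lt_trichotomy p.1 q.1 with h' | h' | h'
    · exact Or.inl h'
    · rw [h'] at h ⊢
      right
      exact ⟨rfl, by omega⟩
    · exfalso
      have hge : q.1 + 1 ≤ p.1 := h'
      have : (q.1 + 1) * (lam.rowLen 0 + 1) ≤ p.1 * (lam.rowLen 0 + 1) :=
        Nat.mul_le_mul_right _ hge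
      have hexp : (q.1 + 1) * (lam.rowLen 0 + 1)
          = q.1 * (lam.rowLen 0 + 1) + (lam.rowLen 0 + 1) := by ring
      omega
  · rintro (h' | ⟨h', h''⟩)
    · have : (p.1 + 1) * (lam.rowLen 0 + 1) ≤ q.1 * (lam.rowLen 0 + 1) :=
        Nat.mul_le_mul_right _ h'
      have hexp : (p.1 + 1) * (lam.rowLen 0 + 1)
          = p.1 * (lam.rowLen 0 + 1) + (lam.rowLen 0 + 1) := by ring
      omega
    · rw [h']
      omega

lemma forced_aux (hnu : nu.colLen 0 ≤ RR lam mu)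
    {T' : ℕ × ℕ → ℕ} (hT' : IsLR lam mu (addOneDiag (RR lam mu) nu) T')
    (t : ℕ) (r : ℕ) (hr : r ∈ neRows lam mu) (ht : gRow lam mu r + 1 = t)
    (ih : ∀ r' ∈ neRows lam mu, gRow lam mu r' + 1 = t + 1 →
      T' (r', lam.rowLen r' - 1) = t + 1) :
    T' (r, lam.rowLen r - 1) = t := by
  have hTfull := hT'
  obtain ⟨⟨hsupp, hrow, hcol⟩, hlat, hcont⟩ := hT'
  have hrlen := mem_neRows.mp hr
  have hlast_mem : (r, lam.rowLen r - 1) ∈ skewCells lam mu := by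
    rw [skew_iff_row]
    omega
  have hub : T' (r, lam.rowLen r - 1) ≤ t := by
    have := entry_le_gRow hTfull (T' (r, lam.rowLen r - 1)) _ hlast_mem rfl
    simp only at this
    omega
  by_contra hne
  have hlt : T' (r, lam.rowLen r - 1) < t := by omega
  have hrowmax : ∀ j, (r, j) ∈ skewCells lam mu → T' (r, j) < t := by
    intro j hj
    have hle : j ≤ lam.rowLen r - 1 := by
      have := skew_iff_row.mp hj
      omega
    have := hrow r j (lam.rowLen r - 1) hj hlast_mem hle
    omega
  -- there exists a cell with entry t
  have htpos : 1 ≤ t := by omega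
  have hgr_lt := gRow_lt_RR hr
  have hcontent : 0 < content lam mu T' t := by
    obtain ⟨t', rfl⟩ : ∃ t', t = t' + 1 := ⟨t - 1, by omega⟩
    rw [hcont t', addOneDiag_rowLen hnu, if_pos (by omega)]
    omega
  rw [content, Finset.card_pos] at hcontent
  -- the minimal cell (in reading order) with entry ≥ t
  have hFne : ((skewCells lam mu).filter fun p => t ≤ T' p).Nonempty := by
    obtain ⟨p, hp⟩ := hcontent
    rw [Finset.mem_filter] at hp
    exact ⟨p, Finset.mem_filter.mpr ⟨hp.1, by omega⟩⟩
  obtain ⟨y, hyF, hymin⟩ :=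
    ((skewCells lam mu).filter fun p => t ≤ T' p).exists_min_image (rkey lam) hFne
  rw [Finset.mem_filter] at hyF
  obtain ⟨hy_mem, hy_ge⟩ := hyF
  -- the minimal cell has entry exactly t
  have hyT : T' y = t := by
    by_contra hc
    have hge2 : t + 1 ≤ T' y := by omega
    obtain ⟨m', hm'⟩ : ∃ m', T' y = m' + 2 := ⟨T' y - 2, by omega⟩
    have hpos : 0 < prefixCount lam mu T' y.1 y.2 (m' + 2) := prefixCount_pos hy_mem hm'
    have := hlat y.1 y.2 m'
    obtain ⟨q, hq_mem, hq_pre, hq_val⟩ := exists_of_prefixCount_pos (by omega :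
      0 < prefixCount lam mu T' y.1 y.2 (m' + 1))
    have hqF : q ∈ (skewCells lam mu).filter fun p => t ≤ T' p :=
      Finset.mem_filter.mpr ⟨hq_mem, by omega⟩
    have hqney : q ≠ y := by
      intro hqy
      rw [hqy] at hq_val
      omega
    have : rkey lam q < rkey lam y := by
      rw [rkey_lt_iff hq_mem hy_mem]
      rcases hq_pre with h | ⟨h, h'⟩
      · exact Or.inl h
      · right
        refine ⟨h, ?_⟩
        rcases Nat.lt_or_ge y.2 q.2 with h'' | h''
        · exact h''
        · exfalso
          exact hqney (Prod.ext h (by omega))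
    have := hymin q hqF
    omega
  -- the row of y
  have hy_row_ne : y.1 ≠ r := by
    intro hc
    have := hrowmax y.2 (by rw [← hc, Prod.mk.eta]; exact hy_mem)
    rw [← hc, Prod.mk.eta] at this
    omega
  have hy_ner : y.1 ∈ neRows lam mu := row_mem_neRows hy_mem
  have hgy : t ≤ gRow lam mu y.1 := by
    have hb := entry_le_gRow hTfull (T' y) y hy_mem rfl
    rcases Nat.lt_or_ge (gRow lam mu y.1) t with h' | h'
    · exfalso
      have : gRow lam mu y.1 = t - 1 := by omega
      have : y.1 = r := gRow_inj hy_ner hr (by omega)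
      exact hy_row_ne this
    · exact h'
  have htR : t < RR lam mu := lt_of_le_of_lt hgy (gRow_lt_RR hy_ner)
  obtain ⟨r', hr', hgr'⟩ := gRow_surj t htR
  have hlast' := ih r' hr' (by omega)
  have hr'len := mem_neRows.mp hr'
  have hlast'_mem : (r', lam.rowLen r' - 1) ∈ skewCells lam mu := by
    rw [skew_iff_row]
    omega
  have hlast'F : (r', lam.rowLen r' - 1) ∈ (skewCells lam mu).filter fun p => t ≤ T' p :=
    Finset.mem_filter.mpr ⟨hlast'_mem, by omega⟩
  rcases Nat.lt_trichotomy r' y.1 with hc | hc | hc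
  · have : rkey lam (r', lam.rowLen r' - 1) < rkey lam y := by
      rw [rkey_lt_iff hlast'_mem hy_mem]
      exact Or.inl hc
    have := hymin _ hlast'F
    omega
  · -- same row
    have hy2 : y.2 < lam.rowLen r' - 1 := by
      have h1 : y.2 ≤ lam.rowLen y.1 - 1 := by
        have := skew_iff_row'.mp hy_mem
        omega
      rcases Nat.lt_or_ge y.2 (lam.rowLen r' - 1) with h | h
      · exact h
      · exfalso
        have hyeq : y = (r', lam.rowLen r' - 1) := by
          apply Prod.ext hc.symm
          show y.2 = lam.rowLen r' - 1
          rw [hc]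
          rw [hc] at h
          omega
        rw [hyeq, hlast'] at hyT
        omega
    have : rkey lam (r', lam.rowLen r' - 1) < rkey lam y := by
      rw [rkey_lt_iff hlast'_mem hy_mem]
      right
      exact ⟨hc, by simpa using hy2⟩
    have := hymin _ hlast'F
    omega
  · have := gRow_lt hy_ner hc
    omega

/-- Forcing: in an LR tableau of `lam/mu` with content `nu + (1^R)`, the rightmost cell
of the `t`-th nonempty row carries entry `t`. -/
lemma forced_last (hnu : nu.colLen 0 ≤ RR lam mu)
    {T' : ℕ × ℕ → ℕ} (hT' : IsLR lam mu (addOneDiag (RR lam mu) nu) T') :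
    ∀ r ∈ neRows lam mu, T' (r, lam.rowLen r - 1) = gRow lam mu r + 1 := by
  suffices H : ∀ d r, r ∈ neRows lam mu → RR lam mu - (gRow lam mu r + 1) = d →
      T' (r, lam.rowLen r - 1) = gRow lam mu r + 1 by
    intro r hr
    exact H (RR lam mu - (gRow lam mu r + 1)) r hr rfl
  intro d
  induction d with
  | zero =>
    intro r hr hd
    have hlt := gRow_lt_RR hr
    apply forced_aux hnu hT' (gRow lam mu r + 1) r hr rfl
    intro r' hr' hgr'
    exfalso
    have := gRow_lt_RR hr'
    omega
  | succ d ih =>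
    intro r hr hd
    have hlt := gRow_lt_RR hr
    apply forced_aux hnu hT' (gRow lam mu r + 1) r hr rfl
    intro r' hr' hgr'
    have := ih r' hr' (by omega)
    omega

end Forcing

section RowStep2

variable {lam mu nu : YoungDiagram}

lemma removed_eq_last {p : ℕ × ℕ} (hp : p ∈ skewCells lam mu)
    (hrem : p.2 + 1 = lam.rowLen p.1) : p = (p.1, lam.rowLen p.1 - 1) := by
  have h2 : p.2 = lam.rowLen p.1 - 1 := by omega
  rw [← h2, Prod.mk.eta]

lemma psiR_prefix_split {T' : ℕ × ℕ → ℕ}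
    (hforce : ∀ r ∈ neRows lam mu, T' (r, lam.rowLen r - 1) = gRow lam mu r + 1)
    (i0 j0 m : ℕ) :
    prefixCount lam mu T' i0 j0 m
    = prefixCount (hshift 1 lam) mu (psiR lam mu T') i0 j0 m + remCount lam mu i0 j0 m := by
  rw [prefixCount, prefixCount, remCount, ← Finset.card_union_of_disjoint]
  · congr 1
    apply Finset.ext
    intro p
    rw [Finset.mem_union, Finset.mem_filter, Finset.mem_filter, Finset.mem_filter,
      skew_hshift_eq_filter, Finset.mem_filter]
    constructor
    · rintro ⟨hp, hQ, hval⟩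
      by_cases hrem : p.2 + 1 = lam.rowLen p.1
      · right
        refine ⟨hp, hQ, hrem, ?_⟩
        have := hforce p.1 (row_mem_neRows hp)
        rw [← removed_eq_last hp hrem] at this
        omega
      · left
        have hkept := kept_mem hp hrem
        refine ⟨⟨hp, by have := skew_iff_row'.mp hp; omega⟩, hQ, ?_⟩
        rw [psiR, if_pos hkept]
        exact hval
    · rintro (⟨⟨hp, hkept⟩, hQ, hval⟩ | ⟨hp, hQ, hrem, hval⟩)
      · refine ⟨hp, hQ, ?_⟩
        rw [psiR, if_pos (kept_mem hp (by omega))] at hval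
        exact hval
      · refine ⟨hp, hQ, ?_⟩
        have := hforce p.1 (row_mem_neRows hp)
        rw [← removed_eq_last hp hrem] at this
        omega
  · rw [Finset.disjoint_left]
    intro p hp hp'
    rw [skew_hshift_eq_filter, Finset.mem_filter, Finset.mem_filter] at hp
    rw [Finset.mem_filter] at hp'
    obtain ⟨⟨_, hkept⟩, _⟩ := hp
    obtain ⟨_, _, hrem, _⟩ := hp'
    omega

lemma psiR_content_split {T' : ℕ × ℕ → ℕ}
    (hforce : ∀ r ∈ neRows lam mu, T' (r, lam.rowLen r - 1) = gRow lam mu r + 1)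
    (m : ℕ) :
    content lam mu T' m
    = content (hshift 1 lam) mu (psiR lam mu T') m + remTotal lam mu m := by
  rw [content, content, remTotal, ← Finset.card_union_of_disjoint]
  · congr 1
    apply Finset.ext
    intro p
    rw [Finset.mem_union, Finset.mem_filter, Finset.mem_filter, Finset.mem_filter,
      skew_hshift_eq_filter, Finset.mem_filter]
    constructor
    · rintro ⟨hp, hval⟩
      by_cases hrem : p.2 + 1 = lam.rowLen p.1
      · right
        refine ⟨hp, hrem, ?_⟩
        have := hforce p.1 (row_mem_neRows hp)
        rw [← removed_eq_last hp hrem] at this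
        omega
      · left
        have hkept := kept_mem hp hrem
        refine ⟨⟨hp, by have := skew_iff_row'.mp hp; omega⟩, ?_⟩
        rw [psiR, if_pos hkept]
        exact hval
    · rintro (⟨⟨hp, hkept⟩, hval⟩ | ⟨hp, hrem, hval⟩)
      · refine ⟨hp, ?_⟩
        rw [psiR, if_pos (kept_mem hp (by omega))] at hval
        exact hval
      · refine ⟨hp, ?_⟩
        have := hforce p.1 (row_mem_neRows hp)
        rw [← removed_eq_last hp hrem] at this
        omega
  · rw [Finset.disjoint_left]
    intro p hp hp'
    rw [skew_hshift_eq_filter, Finset.mem_filter, Finset.mem_filter] at hp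
    rw [Finset.mem_filter] at hp'
    obtain ⟨⟨_, hkept⟩, _⟩ := hp
    obtain ⟨_, hrem, _⟩ := hp'
    omega

lemma prefix_zero_of_remCount_zero {T' : ℕ × ℕ → ℕ}
    (hT' : IsLR lam mu (addOneDiag (RR lam mu) nu) T')
    (hforce : ∀ r ∈ neRows lam mu, T' (r, lam.rowLen r - 1) = gRow lam mu r + 1)
    (i0 j0 k : ℕ) (h : remCount lam mu i0 j0 (k + 2) = 0) :
    prefixCount lam mu T' i0 j0 (k + 2) = 0 := by
  rw [prefixCount, Finset.card_eq_zero]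
  apply Finset.filter_eq_empty_iff.mpr
  intro z hz
  rintro ⟨hpre, hval⟩
  have hb := entry_le_gRow hT' (k + 2) z hz hval
  have hzrow := row_mem_neRows hz
  have hzlt := gRow_lt_RR hzrow
  -- find the row rstar with gRow = k + 1
  obtain ⟨rstar, hrstar, hgstar⟩ : ∃ r'' ∈ neRows lam mu, gRow lam mu r'' = k + 1 := by
    rcases Nat.eq_or_lt_of_le (show k + 1 ≤ gRow lam mu z.1 by omega) with he | hl
    · exact ⟨z.1, hzrow, he.symm⟩
    · exact gRow_surj (k + 1) (by omega)
  have hstar_le : rstar ≤ z.1 := by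
    by_contra hc
    have := gRow_lt hzrow (show z.1 < rstar by omega)
    omega
  have hstar_len := mem_neRows.mp hrstar
  have hmem : (rstar, lam.rowLen rstar - 1) ∈ skewCells lam mu := by
    rw [skew_iff_row]
    omega
  have : 0 < remCount lam mu i0 j0 (k + 2) := by
    rw [remCount, Finset.card_pos]
    refine ⟨(rstar, lam.rowLen rstar - 1), ?_⟩
    rw [Finset.mem_filter]
    refine ⟨hmem, ?_, ?_, by simpa using hgstar⟩
    · show rstar < i0 ∨ (rstar = i0 ∧ j0 ≤ lam.rowLen rstar - 1)
      rcases Nat.eq_or_lt_of_le hstar_le with he | hl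
      · -- same row as z
        rcases hpre with h' | ⟨h', h''⟩
        · left; omega
        · right
          refine ⟨by omega, ?_⟩
          have hz2 := skew_iff_row'.mp hz
          rw [he]
          omega
      · rcases hpre with h' | ⟨h', h''⟩
        · left; omega
        · left; omega
    · show lam.rowLen rstar - 1 + 1 = lam.rowLen rstar
      omega
  omega

lemma psiR_isLR (h1 : mu ≤ hshift 1 lam) (hnu : nu.colLen 0 ≤ RR lam mu)
    {T' : ℕ × ℕ → ℕ} (hT' : IsLR lam mu (addOneDiag (RR lam mu) nu) T') :
    IsLR (hshift 1 lam) mu nu (psiR lam mu T') := by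
  have hforce := forced_last hnu hT'
  have hTfull := hT'
  obtain ⟨⟨hsupp, hrow, hcol⟩, hlat, hcont⟩ := hT'
  refine ⟨⟨?_, ?_, ?_⟩, ?_, ?_⟩
  · intro p
    constructor
    · intro hp
      rw [psiR, if_pos hp]
      exact (hsupp p).mp (skew_hshift_sub hp)
    · intro hp
      by_contra hc
      rw [psiR, if_neg hc] at hp
      omega
  · intro i j1 j2 hm1 hm2 hle
    rw [psiR, if_pos hm1, psiR, if_pos hm2]
    exact hrow i j1 j2 (skew_hshift_sub hm1) (skew_hshift_sub hm2) hle
  · intro i1 i2 j hm1 hm2 hlt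
    rw [psiR, if_pos hm1, psiR, if_pos hm2]
    exact hcol i1 i2 j (skew_hshift_sub hm1) (skew_hshift_sub hm2) hlt
  · intro i0 j0 k
    have hs2 := psiR_prefix_split hforce i0 j0 (k + 2)
    have hs1 := psiR_prefix_split hforce i0 j0 (k + 1)
    have hl := hlat i0 j0 k
    have hr2 := remCount_le_one (lam := lam) (mu := mu) i0 j0 (k + 2)
    have hr1 := remCount_le_one (lam := lam) (mu := mu) i0 j0 (k + 1)
    by_cases hz : remCount lam mu i0 j0 (k + 2) = 0
    · have := prefix_zero_of_remCount_zero hTfull hforce i0 j0 k hz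
      omega
    · have := remCount_mono (lam := lam) (mu := mu) i0 j0 k (by omega)
      omega
  · intro k
    have := psiR_content_split hforce (k + 1)
    rw [hcont k, addOneDiag_rowLen hnu, remTotal_eq] at this
    split_ifs at this with hk
    · omega
    · rw [rowLen_zero_of_ge (show nu.colLen 0 ≤ k by omega)]
      omega

lemma psiR_phiR {T : ℕ × ℕ → ℕ} (hT : IsLR (hshift 1 lam) mu nu T) :
    psiR lam mu (phiR lam mu T) = T := by
  funext p
  by_cases hp : p ∈ skewCells (hshift 1 lam) mu
  · rw [psiR, if_pos hp]
    have hk := mem_skew_hshift.mp hp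
    rw [phiR_val_kept (skew_hshift_sub hp) (by omega)]
  · rw [psiR, if_neg hp]
    by_contra hc
    exact hp ((hT.1.1 p).mpr (fun h => hc h.symm))

lemma phiR_psiR (hnu : nu.colLen 0 ≤ RR lam mu) {T' : ℕ × ℕ → ℕ}
    (hT' : IsLR lam mu (addOneDiag (RR lam mu) nu) T') :
    phiR lam mu (psiR lam mu T') = T' := by
  have hforce := forced_last hnu hT'
  funext p
  by_cases hp : p ∈ skewCells lam mu
  · by_cases hrem : p.2 + 1 = lam.rowLen p.1
    · rw [phiR_val_rem hp hrem]
      have := hforce p.1 (row_mem_neRows hp)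
      rw [← removed_eq_last hp hrem] at this
      omega
    · rw [phiR_val_kept hp hrem, psiR, if_pos (kept_mem hp hrem)]
  · rw [phiR, if_neg hp]
    by_contra hc
    exact hp ((hT'.1.1 p).mpr (fun h => hc h.symm))

/-- Row removal step for the Littlewood–Richardson coefficients. -/
lemma rowStep (h1 : mu ≤ hshift 1 lam) (hnu : nu.colLen 0 ≤ RR lam mu) :
    lrCoeff (hshift 1 lam) mu nu = lrCoeff lam mu (addOneDiag (RR lam mu) nu) := by
  have hmu : mu ≤ lam := le_trans h1 hshift_le
  rw [lrCoeff, if_pos h1, lrCoeff, if_pos hmu]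
  have hbij : Set.BijOn (phiR lam mu)
      {T : ℕ × ℕ → ℕ | IsLR (hshift 1 lam) mu nu T}
      {T : ℕ × ℕ → ℕ | IsLR lam mu (addOneDiag (RR lam mu) nu) T} := by
    refine ⟨?_, ?_, ?_⟩
    · intro T hT
      exact phiR_isLR h1 hnu hT
    · intro T1 h1' T2 h2' heq
      rw [← psiR_phiR h1', ← psiR_phiR h2', heq]
    · intro T' hT'
      exact ⟨psiR lam mu T', psiR_isLR h1 hnu hT', phiR_psiR hnu hT'⟩
  rw [← hbij.image_eq, Set.ncard_image_of_injOn hbij.injOn]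

/-- Vanishing case of the row removal step. -/
lemma rowStep_zero (h1 : mu ≤ hshift 1 lam) (hnu : RR lam mu < nu.colLen 0) :
    lrCoeff (hshift 1 lam) mu nu = 0 := by
  rw [lrCoeff, if_pos h1]
  have hempty : {T : ℕ × ℕ → ℕ | IsLR (hshift 1 lam) mu nu T} = ∅ := by
    rw [Set.eq_empty_iff_forall_notMem]
    intro T hT
    rw [Set.mem_setOf_eq] at hT
    have hb := colLen_le_RR_of_isLR hT
    have := RR_hshift_le lam mu
    omega
  rw [hempty, Set.ncard_empty]

lemma RR_eq_of_schurEq {alp bet : YoungDiagram} (h : SchurEq lam mu alp bet)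
    (h1 : mu ≤ hshift 1 lam) (h2 : bet ≤ hshift 1 alp) : RR lam mu = RR alp bet := by
  have key : ∀ lam' mu' alp' bet' : YoungDiagram, SchurEq lam' mu' alp' bet' →
      mu' ≤ hshift 1 lam' → RR lam' mu' ≤ RR alp' bet' := by
    intro lam' mu' alp' bet' h' hmu'
    have hnu' : (colDiag (hshift 1 lam') mu').colLen 0 ≤ RR lam' mu' :=
      le_trans (colDiag_colLen_le (hshift 1 lam') mu') (RR_hshift_le lam' mu')
    have hstep := rowStep hmu' hnu'
    have hpos := lrCoeff_colDiag_pos hmu'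
    have hne : lrCoeff alp' bet' (addOneDiag (RR lam' mu') (colDiag (hshift 1 lam') mu')) ≠ 0 := by
      rw [← h' _]
      omega
    obtain ⟨T, hT⟩ := lr_nonempty_of_lrCoeff_ne_zero hne
    have := colLen_le_RR_of_isLR hT
    rw [addOneDiag_colLen_zero hnu'] at this
    exact this
  have h' : SchurEq alp bet lam mu := fun nu => (h nu).symm
  exact le_antisymm (key _ _ _ _ h h1) (key _ _ _ _ h' h2)

lemma schurEq_hstep {alp bet : YoungDiagram} (h : SchurEq lam mu alp bet)
    (h1 : mu ≤ hshift 1 lam) (h2 : bet ≤ hshift 1 alp) :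
    SchurEq (hshift 1 lam) mu (hshift 1 alp) bet := by
  have hR : RR alp bet = RR lam mu := (RR_eq_of_schurEq h h1 h2).symm
  intro nu
  by_cases hnu : nu.colLen 0 ≤ RR lam mu
  · rw [rowStep h1 hnu, rowStep h2 (by omega)]
    rw [hR]
    exact h _
  · rw [rowStep_zero h1 (by omega), rowStep_zero h2 (by omega)]

lemma schurEq_hshift {mu bet : YoungDiagram} :
    ∀ (i : ℕ) (lam alp : YoungDiagram), mu ≤ hshift i lam → bet ≤ hshift i alp →
    SchurEq lam mu alp bet → SchurEq (hshift i lam) mu (hshift i alp) bet := by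
  intro i
  induction i with
  | zero =>
    intro lam alp _ _ h
    rw [hshift_zero, hshift_zero]
    exact h
  | succ i ih =>
    intro lam alp hmu hbet h
    have hmu1 : mu ≤ hshift 1 lam := le_trans hmu hshift_succ_le
    have hbet1 : bet ≤ hshift 1 alp := le_trans hbet hshift_succ_le
    have hstep := schurEq_hstep h hmu1 hbet1
    have hmu' : mu ≤ hshift i (hshift 1 lam) := by rw [hshift_hshift]; exact hmu
    have hbet' : bet ≤ hshift i (hshift 1 alp) := by rw [hshift_hshift]; exact hbet
    have := ih (hshift 1 lam) (hshift 1 alp) hmu' hbet' hstep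
    rw [hshift_hshift, hshift_hshift] at this
    exact this

end RowStep2

/-- removing the top `i` boxes from every column (resp. the left `i` boxes from
every row) of two basic skew diagrams with equal skew Schur functions again yields skew
diagrams with equal skew Schur functions. -/
theorem schurEq_remove_boxes (lam mu alp bet : YoungDiagram)
    (hmu : mu ≤ lam) (hbet : bet ≤ alp)
    (hbasic1 : IsBasic lam mu) (hbasic2 : IsBasic alp bet)
    (h : SchurEq lam mu alp bet) (i : ℕ)
    (lamHat alpHat : YoungDiagram)
    (hlamHat : ∀ j, lamHat.colLen j = lam.colLen j - i)
    (halpHat : ∀ j, alpHat.colLen j = alp.colLen j - i)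
    (hmuHat : mu ≤ lamHat) (hbetHat : bet ≤ alpHat)
    (lamTil alpTil : YoungDiagram)
    (hlamTil : ∀ r, lamTil.rowLen r = lam.rowLen r - i)
    (halpTil : ∀ r, alpTil.rowLen r = alp.rowLen r - i)
    (hmuTil : mu ≤ lamTil) (hbetTil : bet ≤ alpTil) :
    SchurEq lamHat mu alpHat bet ∧ SchurEq lamTil mu alpTil bet := by
  have hHat1 : lamHat = vshift i lam := by
    apply SetLike.ext
    rintro ⟨r, j⟩
    rw [mem_iff_lt_colLen, hlamHat, mem_vshift, mem_iff_lt_colLen]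
    show r < lam.colLen j - i ↔ r + i < lam.colLen j
    omega
  have hHat2 : alpHat = vshift i alp := by
    apply SetLike.ext
    rintro ⟨r, j⟩
    rw [mem_iff_lt_colLen, halpHat, mem_vshift, mem_iff_lt_colLen]
    show r < alp.colLen j - i ↔ r + i < alp.colLen j
    omega
  have hTil1 : lamTil = hshift i lam := by
    apply SetLike.ext
    rintro ⟨r, j⟩
    rw [mem_iff_lt_rowLen, hlamTil, mem_hshift, mem_iff_lt_rowLen]
    show j < lam.rowLen r - i ↔ j + i < lam.rowLen r
    omega
  have hTil2 : alpTil = hshift i alp := by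
    apply SetLike.ext
    rintro ⟨r, j⟩
    rw [mem_iff_lt_rowLen, halpTil, mem_hshift, mem_iff_lt_rowLen]
    show j < alp.rowLen r - i ↔ j + i < alp.rowLen r
    omega
  constructor
  · rw [hHat1, hHat2]
    exact schurEq_vshift i lam alp (hHat1 ▸ hmuHat) (hHat2 ▸ hbetHat) h
  · rw [hTil1, hTil2]
    exact schurEq_hshift i lam alp (hTil1 ▸ hmuTil) (hTil2 ▸ hbetTil) h
end LRSkew
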